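/- arXiv:1104.1906 — 8 statements merged into one kernel-verified Lean document; each statement's English description precedes it below -/
import Mathlib

section
/- For all positive integers ℓ and n, with L = lcm(ℓ,n), one has (1/L) · Σ_{k=1}^{L} c_ℓ(k)·c_n(k) = φ(n) if ℓ = n, and 0 otherwise. -/
open Finset ArithmeticFunction
open scoped ArithmeticFunction.Moebius
open scoped ArithmeticFunction.zeta

/-- The Ramanujan sum `c_n(k) = ∑_{d ∣ gcd(k,n)} d · μ(n/d)`, for integer `k`. -/
def ramanujanSum (n : ℕ) (k : ℤ) : ℤ :=
  ∑ d ∈ (Int.gcd k n).divisors, (d : ℤ) * μ (n / d)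

lemma moebius_sum (n : ℕ) : ∑ d ∈ n.divisors, (μ d : ℤ) = if n = 1 then 1 else 0 := by
  have h : (μ * ↑ζ : ArithmeticFunction ℤ) n = (1 : ArithmeticFunction ℤ) n := by
    rw [moebius_mul_coe_zeta]
  rwa [coe_mul_zeta_apply, one_apply] at h

lemma lemA (l t : ℕ) (hl : l ≠ 0) :
    ∑ d ∈ l.divisors.filter (t ∣ ·), (μ (l / d) : ℤ) = if t = l then 1 else 0 := by
  by_cases ht : t ∣ l
  · have ht0 : t ≠ 0 := fun h => hl (by simpa [h] using ht)
    have key : ∑ d ∈ l.divisors.filter (t ∣ ·), (μ (l / d) : ℤ)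
        = ∑ d' ∈ (l / t).divisors, (μ ((l / t) / d') : ℤ) := by
      refine Finset.sum_nbij' (fun d => d / t) (fun d' => t * d') ?_ ?_ ?_ ?_ ?_
      · intro d hd
        simp only [mem_filter, Nat.mem_divisors] at hd
        obtain ⟨⟨hdl, -⟩, c, rfl⟩ := hd
        simp only [Nat.mul_div_cancel_left _ (Nat.pos_of_ne_zero ht0), Nat.mem_divisors]
        exact ⟨(Nat.dvd_div_iff_mul_dvd ht).2 hdl,
          fun h => hl (by rw [← Nat.mul_div_cancel' ht, h, mul_zero])⟩
      · intro d' hd'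
        simp only [Nat.mem_divisors] at hd'
        simp only [mem_filter, Nat.mem_divisors]
        exact ⟨⟨Nat.mul_dvd_of_dvd_div ht hd'.1, hl⟩, Dvd.intro _ rfl⟩
      · intro d hd
        simp only [mem_filter] at hd
        exact Nat.mul_div_cancel' hd.2
      · intro d' _
        exact Nat.mul_div_cancel_left _ (Nat.pos_of_ne_zero ht0)
      · intro d hd
        simp only [mem_filter] at hd
        obtain ⟨-, c, rfl⟩ := hd
        simp only [Nat.mul_div_cancel_left _ (Nat.pos_of_ne_zero ht0), Nat.div_div_eq_div_mul]
    rw [key, Nat.sum_div_divisors, moebius_sum]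
    have : l / t = 1 ↔ t = l := by
      constructor
      · intro h
        have h2 := Nat.mul_div_cancel' ht
        rw [h] at h2
        simpa using h2
      · rintro rfl
        exact Nat.div_self (Nat.pos_of_ne_zero ht0)
    simp [this]
  · rw [Finset.filter_false_of_mem, Finset.sum_empty]
    · have : t ≠ l := fun h => ht (h ▸ dvd_refl l)
      simp [this]
    · intro d hd
      exact fun hc => ht (hc.trans (Nat.mem_divisors.mp hd).1)

lemma ramanujan_eq (n : ℕ) (hn : n ≠ 0) (k : ℕ) :
    ramanujanSum n (k : ℤ) = ∑ d ∈ n.divisors, if d ∣ k then (d : ℤ) * μ (n / d) else 0 := by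
  rw [ramanujanSum, ← Finset.sum_filter]
  congr 1
  ext d
  simp only [Int.gcd_natCast_natCast, Nat.mem_divisors, mem_filter, Nat.dvd_gcd_iff]
  constructor
  · rintro ⟨⟨h1, h2⟩, -⟩
    exact ⟨⟨h2, hn⟩, h1⟩
  · rintro ⟨⟨h2, -⟩, h1⟩
    exact ⟨⟨h1, h2⟩, Nat.gcd_ne_zero_right hn⟩

lemma count_dvd (L m : ℕ) : ((Icc 1 L).filter (m ∣ ·)).card = L / m := by
  rw [show Icc 1 L = Ioc 0 L from rfl]
  exact Nat.Ioc_filter_dvd_card_eq_div L m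

lemma gcd_divisors_eq (l n d e : ℕ) (hl : l ≠ 0) (hd : d ∣ l) (_he : e ∣ n) (hd0 : d ≠ 0) :
    (Nat.gcd d e).divisors = l.divisors.filter (fun t => t ∣ d ∧ t ∣ e) := by
  ext t
  simp only [Nat.mem_divisors, mem_filter, Nat.dvd_gcd_iff]
  constructor
  · rintro ⟨⟨h1, h2⟩, -⟩
    exact ⟨⟨h1.trans hd, hl⟩, h1, h2⟩
  · rintro ⟨-, h1, h2⟩
    exact ⟨⟨h1, h2⟩, Nat.gcd_ne_zero_left hd0⟩

lemma main_int (l n : ℕ) (hl : l ≠ 0) (hn : n ≠ 0) :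
    ∑ k ∈ Icc 1 (Nat.lcm l n), ramanujanSum l k * ramanujanSum n k
      = (Nat.lcm l n : ℤ) * (if l = n then (Nat.totient n : ℤ) else 0) := by
  set L := Nat.lcm l n with hLdef
  calc ∑ k ∈ Icc 1 L, ramanujanSum l k * ramanujanSum n k
      = ∑ k ∈ Icc 1 L, ∑ d ∈ l.divisors, ∑ e ∈ n.divisors,
          (if d ∣ k then (d : ℤ) * μ (l / d) else 0) *
          (if e ∣ k then (e : ℤ) * μ (n / e) else 0) := by
        refine Finset.sum_congr rfl fun k _ => ?_
        rw [ramanujan_eq l hl k, ramanujan_eq n hn k, Finset.sum_mul_sum]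
    _ = ∑ d ∈ l.divisors, ∑ e ∈ n.divisors, ∑ k ∈ Icc 1 L,
          (if d ∣ k then (d : ℤ) * μ (l / d) else 0) *
          (if e ∣ k then (e : ℤ) * μ (n / e) else 0) := by
        rw [Finset.sum_comm]
        exact Finset.sum_congr rfl fun d _ => Finset.sum_comm
    _ = ∑ d ∈ l.divisors, ∑ e ∈ n.divisors,
          ((L / Nat.lcm d e : ℕ) : ℤ) * ((d : ℤ) * μ (l / d) * ((e : ℤ) * μ (n / e))) := by
        refine Finset.sum_congr rfl fun d hd => Finset.sum_congr rfl fun e he => ?_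
        have hstep : ∀ k : ℕ, (if d ∣ k then (d : ℤ) * μ (l / d) else 0) *
            (if e ∣ k then (e : ℤ) * μ (n / e) else 0)
            = if Nat.lcm d e ∣ k then (d : ℤ) * μ (l / d) * ((e : ℤ) * μ (n / e)) else 0 := by
          intro k
          have hiff : Nat.lcm d e ∣ k ↔ d ∣ k ∧ e ∣ k :=
            ⟨fun h => ⟨(Nat.dvd_lcm_left d e).trans h, (Nat.dvd_lcm_right d e).trans h⟩,
             fun h => Nat.lcm_dvd h.1 h.2⟩
          by_cases h1 : d ∣ k <;> by_cases h2 : e ∣ k <;> simp [h1, h2, hiff]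
        simp_rw [hstep]
        rw [← Finset.sum_filter, Finset.sum_const, count_dvd, nsmul_eq_mul]
    _ = ∑ d ∈ l.divisors, ∑ e ∈ n.divisors,
          (L : ℤ) * ((Nat.gcd d e : ℤ) * (μ (l / d) * μ (n / e))) := by
        refine Finset.sum_congr rfl fun d hd => Finset.sum_congr rfl fun e he => ?_
        rw [Nat.mem_divisors] at hd he
        have hdvd : Nat.lcm d e ∣ L :=
          Nat.lcm_dvd (hd.1.trans (Nat.dvd_lcm_left l n)) (he.1.trans (Nat.dvd_lcm_right l n))
        have natid : L / Nat.lcm d e * (d * e) = Nat.gcd d e * L := by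
          rw [← Nat.gcd_mul_lcm d e, show L / Nat.lcm d e * (Nat.gcd d e * Nat.lcm d e)
            = Nat.gcd d e * (L / Nat.lcm d e * Nat.lcm d e) by ring, Nat.div_mul_cancel hdvd]
        have cid : ((L / Nat.lcm d e : ℕ) : ℤ) * ((d : ℤ) * e) = (Nat.gcd d e : ℤ) * L := by
          exact_mod_cast congrArg (Nat.cast : ℕ → ℤ) natid
        linear_combination (μ (l / d) * μ (n / e)) * cid
    _ = (L : ℤ) * ∑ d ∈ l.divisors, ∑ e ∈ n.divisors,
          (Nat.gcd d e : ℤ) * (μ (l / d) * μ (n / e)) := by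
        rw [Finset.mul_sum]
        exact Finset.sum_congr rfl fun d _ => (Finset.mul_sum _ _ _).symm
    _ = (L : ℤ) * (if l = n then (Nat.totient n : ℤ) else 0) := by
        congr 1
        calc ∑ d ∈ l.divisors, ∑ e ∈ n.divisors, (Nat.gcd d e : ℤ) * (μ (l / d) * μ (n / e))
            = ∑ d ∈ l.divisors, ∑ e ∈ n.divisors, ∑ t ∈ l.divisors,
              (if t ∣ d then (1 : ℤ) else 0) * (if t ∣ e then (1 : ℤ) else 0) *
                ((Nat.totient t : ℤ) * (μ (l / d) * μ (n / e))) := by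
              refine Finset.sum_congr rfl fun d hd => Finset.sum_congr rfl fun e he => ?_
              rw [Nat.mem_divisors] at hd he
              have hgcd : (Nat.gcd d e : ℤ) = ∑ t ∈ l.divisors,
                  (if t ∣ d then (1 : ℤ) else 0) * (if t ∣ e then (1 : ℤ) else 0) *
                    (Nat.totient t : ℤ) := by
                have h1 : Nat.gcd d e = ∑ t ∈ (Nat.gcd d e).divisors, Nat.totient t :=
                  (Nat.sum_totient _).symm
                have hd0 : d ≠ 0 := fun h => hl (by simpa [h] using hd.1)
                rw [gcd_divisors_eq l n d e hl hd.1 he.1 hd0] at h1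
                rw [h1]
                push_cast
                rw [Finset.sum_filter]
                refine Finset.sum_congr rfl fun t _ => ?_
                split_ifs with h1 h2 h3 <;> simp_all
              rw [hgcd, Finset.sum_mul]
              exact Finset.sum_congr rfl fun t _ => by ring
          _ = ∑ t ∈ l.divisors, ∑ d ∈ l.divisors, ∑ e ∈ n.divisors,
              (if t ∣ d then (1 : ℤ) else 0) * (if t ∣ e then (1 : ℤ) else 0) *
                ((Nat.totient t : ℤ) * (μ (l / d) * μ (n / e))) := by
              exact (Finset.sum_congr rfl fun d _ => Finset.sum_comm).trans Finset.sum_comm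
          _ = ∑ t ∈ l.divisors, ((Nat.totient t : ℤ) *
                ((∑ d ∈ l.divisors, if t ∣ d then μ (l / d) else 0) *
                 (∑ e ∈ n.divisors, if t ∣ e then μ (n / e) else 0))) := by
              refine Finset.sum_congr rfl fun t _ => ?_
              rw [Finset.sum_mul_sum, Finset.mul_sum]
              refine Finset.sum_congr rfl fun d _ => ?_
              rw [Finset.mul_sum]
              refine Finset.sum_congr rfl fun e _ => ?_
              split_ifs <;> ring
          _ = ∑ t ∈ l.divisors, ((Nat.totient t : ℤ) *
                ((if t = l then (1 : ℤ) else 0) * (if t = n then (1 : ℤ) else 0))) := by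
              refine Finset.sum_congr rfl fun t _ => ?_
              rw [← Finset.sum_filter, ← Finset.sum_filter, lemA l t hl, lemA n t hn]
          _ = if l = n then (Nat.totient n : ℤ) else 0 := by
              rw [Finset.sum_eq_single l]
              · by_cases h : l = n <;> simp [h]
              · intro t _ htl
                simp [htl]
              · intro h
                exact absurd (Nat.mem_divisors_self l hl) h

theorem orthogonality_ramanujanSum (l n : ℕ) (hl : 0 < l) (hn : 0 < n) :
    (1 / (Nat.lcm l n : ℚ)) *
      ∑ k ∈ Icc 1 (Nat.lcm l n), (ramanujanSum l k : ℚ) * (ramanujanSum n k : ℚ) =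
      if l = n then (Nat.totient n : ℚ) else 0 := by
  have hl' : l ≠ 0 := hl.ne'
  have hn' : n ≠ 0 := hn.ne'
  have hL : (Nat.lcm l n : ℚ) ≠ 0 := by
    exact_mod_cast Nat.lcm_ne_zero hl' hn'
  have key := main_int l n hl' hn'
  have keyQ : ∑ k ∈ Icc 1 (Nat.lcm l n), (ramanujanSum l k : ℚ) * (ramanujanSum n k : ℚ)
      = (Nat.lcm l n : ℚ) * (if l = n then (Nat.totient n : ℚ) else 0) := by
    have := congrArg (Int.cast : ℤ → ℚ) key
    push_cast at this
    convert this using 2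
  rw [keyQ, ← mul_assoc, one_div, inv_mul_cancel₀ hL, one_mul]
end

section
/- For every positive integer n and every integer a, Σ_{1 ≤ k ≤ n, gcd(k,n)=1} c_n(k - a) = μ(n)·c_n(a). -/
open Finset ArithmeticFunction
open scoped ArithmeticFunction.Moebius
open scoped ArithmeticFunction.zeta

lemma sum_moebius_divisors (g : ℕ) :
    ∑ e ∈ g.divisors, (μ e : ℤ) = if g = 1 then 1 else 0 := by
  have h : (μ * (ζ : ArithmeticFunction ℤ)) g = (1 : ArithmeticFunction ℤ) g := by
    rw [moebius_mul_coe_zeta]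
  rwa [coe_mul_zeta_apply, one_apply] at h


lemma inner_geom {n e : ℕ} (hn : 0 < n) (he : e ∣ n) (he0 : 0 < e) {z : ℂ}
    (hz : IsPrimitiveRoot z n) (m : ℤ) :
    ∑ j ∈ (range n).filter (fun j => e ∣ j), z ^ ((j : ℤ) * m)
      = if ((n / e : ℕ) : ℤ) ∣ m then ((n / e : ℕ) : ℂ) else 0 := by
  set q := n / e with hqdef
  have hq : e * q = n := Nat.mul_div_cancel' he
  have himg : (range n).filter (fun j => e ∣ j) = (range q).image (fun t => e * t) := by
    ext j
    simp only [mem_filter, mem_range, mem_image]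
    constructor
    · rintro ⟨hj, t, rfl⟩
      exact ⟨t, by nlinarith, rfl⟩
    · rintro ⟨t, ht, rfl⟩
      exact ⟨by nlinarith, t, rfl⟩
  rw [himg, Finset.sum_image (by
    intro a _ b _ h
    exact Nat.eq_of_mul_eq_mul_left he0 h)]
  set x : ℂ := z ^ ((e : ℤ) * m) with hxdef
  have hterm : ∀ t ∈ range q, z ^ (((e * t : ℕ) : ℤ) * m) = x ^ t := by
    intro t _
    rw [hxdef, ← zpow_natCast (z ^ ((e : ℤ) * m)) t, ← zpow_mul]
    congr 1
    push_cast
    ring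
  rw [Finset.sum_congr rfl hterm]
  have hxq : x ^ q = 1 := by
    rw [hxdef, ← zpow_natCast _ q, ← zpow_mul]
    have : (e : ℤ) * m * q = n * m := by push_cast [← hq]; ring
    rw [this, zpow_mul, zpow_natCast, hz.pow_eq_one, one_zpow]
  have hx1 : x = 1 ↔ ((q : ℕ) : ℤ) ∣ m := by
    rw [hxdef, hz.zpow_eq_one_iff_dvd]
    constructor
    · intro h
      have : (e : ℤ) * q ∣ (e : ℤ) * m := by rw_mod_cast [hq]; exact_mod_cast h
      exact (mul_dvd_mul_iff_left (by exact_mod_cast he0.ne' : (e : ℤ) ≠ 0)).mp this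
    · intro h
      have : (e : ℤ) * q ∣ (e : ℤ) * m := mul_dvd_mul_left _ h
      rwa [show (e : ℤ) * q = (n : ℤ) by exact_mod_cast hq] at this
  split
  case isTrue h =>
    rw [Finset.sum_congr rfl (fun t _ => by rw [hx1.mpr h, one_pow])]
    simp
  case isFalse h =>
    have hx : x ≠ 1 := fun hc => h (hx1.mp hc)
    rw [geom_sum_eq hx, hxq]
    simp

lemma divisors_gcd_eq (n : ℕ) (hn : 0 < n) (m : ℤ) :
    n.divisors.filter (fun d : ℕ => (d : ℤ) ∣ m) = (Int.gcd m n).divisors := by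
  have hgcd : Int.gcd m n ∣ n := by
    have h := Int.gcd_dvd_right (a := m) (b := (n : ℤ))
    exact_mod_cast h
  rw [← Nat.divisors_filter_dvd_of_dvd hn.ne' hgcd]
  apply Finset.filter_congr
  intro d hd
  have hdn : d ∣ n := (Nat.mem_divisors.mp hd).1
  have key : Int.gcd m n = Nat.gcd m.natAbs n := by
    rw [Int.gcd, Int.natAbs_natCast]
  rw [key]
  constructor
  · intro h
    exact Nat.dvd_gcd (Int.natCast_dvd.mp h) hdn
  · intro h
    have h1 : d ∣ m.natAbs := h.trans (Nat.gcd_dvd_left _ _)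
    exact Int.natCast_dvd.mpr h1

lemma lemA_s2 {n : ℕ} (hn : 0 < n) {z : ℂ} (hz : IsPrimitiveRoot z n) (m : ℤ) :
    ∑ j ∈ (range n).filter (fun j => Nat.gcd j n = 1), z ^ ((j : ℤ) * m)
      = (ramanujanSum n m : ℂ) := by
  have hz0 : z ≠ 0 := hz.ne_zero hn.ne'
  -- step 1: indicator
  rw [Finset.sum_filter]
  have step2 : ∀ j ∈ range n,
      (if Nat.gcd j n = 1 then z ^ ((j : ℤ) * m) else 0)
        = ∑ e ∈ (Nat.gcd j n).divisors, (μ e : ℂ) * z ^ ((j : ℤ) * m) := by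
    intro j hj
    rw [← Finset.sum_mul]
    have : (∑ e ∈ (Nat.gcd j n).divisors, (μ e : ℂ))
        = if Nat.gcd j n = 1 then 1 else 0 := by
      have := sum_moebius_divisors (Nat.gcd j n)
      rw [← Int.cast_sum, this]
      split <;> simp
    rw [this]
    split <;> simp
  rw [Finset.sum_congr rfl step2]
  -- step 4: swap
  rw [Finset.sum_comm' (s' := fun e => (range n).filter (fun j => e ∣ j)) (t' := n.divisors)
    (by
      have hg : ∀ j : ℕ, Nat.gcd j n ≠ 0 :=
        fun j h => hn.ne' (Nat.eq_zero_of_gcd_eq_zero_right h)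
      have hn' := hn.ne'
      intro j e
      have := hg j
      simp only [Nat.mem_divisors, mem_filter, mem_range, Nat.dvd_gcd_iff]
      tauto)]
  have step5 : ∀ e ∈ n.divisors,
      (∑ j ∈ (range n).filter (fun j => e ∣ j), (μ e : ℂ) * z ^ ((j : ℤ) * m))
        = (μ e : ℂ) * (if ((n / e : ℕ) : ℤ) ∣ m then ((n / e : ℕ) : ℂ) else 0) := by
    intro e he
    rw [← Finset.mul_sum,
      inner_geom hn (Nat.mem_divisors.mp he).1 (Nat.pos_of_mem_divisors he) hz m]
  rw [Finset.sum_congr rfl step5]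
  have step6 : ∀ e ∈ n.divisors,
      (μ e : ℂ) * (if ((n / e : ℕ) : ℤ) ∣ m then ((n / e : ℕ) : ℂ) else 0)
        = (fun d : ℕ => (μ (n / d) : ℂ) * (if (d : ℤ) ∣ m then (d : ℂ) else 0)) (n / e) := by
    intro e he
    simp only
    rw [Nat.div_div_self (Nat.mem_divisors.mp he).1 hn.ne']
  rw [Finset.sum_congr rfl step6]
  rw [Nat.sum_div_divisors n (fun d : ℕ => (μ (n / d) : ℂ) * (if (d : ℤ) ∣ m then (d : ℂ) else 0))]
  have step7 : ∀ d ∈ n.divisors,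
      (μ (n / d) : ℂ) * (if (d : ℤ) ∣ m then (d : ℂ) else 0)
        = if (d : ℤ) ∣ m then (d : ℂ) * (μ (n / d) : ℂ) else 0 := by
    intro d _
    split <;> ring
  rw [Finset.sum_congr rfl step7, ← Finset.sum_filter, divisors_gcd_eq n hn m]
  rw [ramanujanSum]
  push_cast
  rfl

lemma ramanujanSum_coprime {n : ℕ} (j : ℕ) (h : Nat.gcd j n = 1) :
    ramanujanSum n (j : ℤ) = μ n := by
  rw [ramanujanSum, Int.gcd_natCast_natCast, h]
  simp

lemma ramanujanSum_neg (n : ℕ) (a : ℤ) : ramanujanSum n (-a) = ramanujanSum n a := by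
  rw [ramanujanSum, ramanujanSum, Int.neg_gcd]

theorem cohen_identity (n : ℕ) (hn : 0 < n) (a : ℤ) :
    ∑ k ∈ (Icc 1 n).filter (fun k => Nat.gcd k n = 1), ramanujanSum n ((k : ℤ) - a) =
      μ n * ramanujanSum n a := by
  by_cases h1 : n = 1
  · subst h1
    simp [ramanujanSum, Int.gcd]
  have hset : (Icc 1 n).filter (fun k => Nat.gcd k n = 1)
      = (range n).filter (fun k => Nat.gcd k n = 1) := by
    ext k
    simp only [mem_filter, mem_Icc, mem_range]
    constructor
    · rintro ⟨⟨hk1, hkn⟩, hg⟩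
      refine ⟨lt_of_le_of_ne hkn fun h => ?_, hg⟩
      subst h
      rw [Nat.gcd_self] at hg
      exact h1 hg
    · rintro ⟨hkn, hg⟩
      have hk0 : k ≠ 0 := by
        rintro rfl
        rw [Nat.gcd_zero_left] at hg
        exact h1 hg
      exact ⟨⟨Nat.one_le_iff_ne_zero.mpr hk0, hkn.le⟩, hg⟩
  rw [hset]
  set S := (range n).filter (fun k => Nat.gcd k n = 1) with hS
  set z : ℂ := Complex.exp (2 * Real.pi * Complex.I / n) with hzdef
  have hz : IsPrimitiveRoot z n := Complex.isPrimitiveRoot_exp n hn.ne'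
  have hz0 : z ≠ 0 := hz.ne_zero hn.ne'
  have key : ((∑ k ∈ S, ramanujanSum n ((k : ℤ) - a) : ℤ) : ℂ)
      = ((μ n * ramanujanSum n a : ℤ) : ℂ) := by
    push_cast
    calc ∑ k ∈ S, (ramanujanSum n ((k : ℤ) - a) : ℂ)
        = ∑ k ∈ S, ∑ j ∈ S, z ^ ((j : ℤ) * ((k : ℤ) - a)) := by
          refine Finset.sum_congr rfl fun k _ => ?_
          rw [lemA_s2 hn hz ((k : ℤ) - a)]
      _ = ∑ j ∈ S, ∑ k ∈ S, z ^ ((k : ℤ) * (j : ℤ)) * z ^ ((j : ℤ) * (-a)) := by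
          rw [Finset.sum_comm]
          refine Finset.sum_congr rfl fun j _ => Finset.sum_congr rfl fun k _ => ?_
          rw [← zpow_add₀ hz0]
          congr 1
          ring
      _ = ∑ j ∈ S, (ramanujanSum n (j : ℤ) : ℂ) * z ^ ((j : ℤ) * (-a)) := by
          refine Finset.sum_congr rfl fun j _ => ?_
          rw [← Finset.sum_mul, lemA_s2 hn hz (j : ℤ)]
      _ = ∑ j ∈ S, (μ n : ℂ) * z ^ ((j : ℤ) * (-a)) := by
          refine Finset.sum_congr rfl fun j hj => ?_
          rw [ramanujanSum_coprime j (Finset.mem_filter.mp hj).2]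
      _ = (μ n : ℂ) * (ramanujanSum n (-a) : ℂ) := by
          rw [← Finset.mul_sum, lemA_s2 hn hz (-a)]
      _ = (μ n : ℂ) * (ramanujanSum n a : ℂ) := by
          rw [ramanujanSum_neg]
  exact_mod_cast key
end

section
/- For every positive integers n and k, Σ_{d | n, gcd(d,k)=1} d·μ(n/d)/φ(d) = μ(n)·c_n(k)/φ(n) (the Brauer–Rademacher identity). -/
open Finset ArithmeticFunction
open scoped ArithmeticFunction.Moebius

noncomputable def brF (k : ℕ) : ArithmeticFunction ℚ :=
  ⟨fun d => if Nat.gcd d k = 1 then (d : ℚ) / (Nat.totient d : ℚ) else 0, by simp⟩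

@[simp] lemma brF_apply (k d : ℕ) :
    brF k d = if Nat.gcd d k = 1 then (d : ℚ) / (Nat.totient d : ℚ) else 0 := rfl

lemma mul_moebius_apply_prime_pow (f : ArithmeticFunction ℚ) {p : ℕ} (hp : p.Prime) (i : ℕ) :
    (f * (μ : ArithmeticFunction ℚ)) (p ^ i) =
      ∑ j ∈ range (i + 1), f (p ^ j) * ((μ (p ^ (i - j)) : ℤ) : ℚ) := by
  rw [mul_apply, Nat.sum_divisorsAntidiagonal (f := fun x y => f x * (μ : ArithmeticFunction ℚ) y),
    Nat.sum_divisors_prime_pow hp]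
  refine Finset.sum_congr rfl fun j hj => ?_
  rw [mem_range] at hj
  rw [Nat.pow_div (by omega) hp.pos, intCoe_apply]

lemma sum_trunc (f : ℕ → ℚ) {p : ℕ} (hp : p.Prime) (m : ℕ) :
    ∑ j ∈ range (m + 3), f j * ((μ (p ^ (m + 2 - j)) : ℤ) : ℚ) =
      f (m + 1) * ((μ p : ℤ) : ℚ) + f (m + 2) := by
  rw [sum_range_succ, sum_range_succ]
  have h0 : ∑ j ∈ range (m + 1), f j * ((μ (p ^ (m + 2 - j)) : ℤ) : ℚ) = 0 := by
    refine Finset.sum_eq_zero fun j hj => ?_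
    rw [mem_range] at hj
    rw [moebius_apply_prime_pow hp (by omega), if_neg (by omega)]
    simp
  rw [h0]
  simp [Nat.sub_self, pow_one, Nat.succ_sub_one]

noncomputable def brG (k : ℕ) : ArithmeticFunction ℚ :=
  ⟨fun d => if d ∣ k then (d : ℚ) else 0, by simp⟩

@[simp] lemma brG_apply (k d : ℕ) : brG k d = if d ∣ k then (d : ℚ) else 0 := rfl

lemma br_key {k p : ℕ} (hp : p.Prime) (i : ℕ) :
    (brF k * (μ : ArithmeticFunction ℚ)) (p ^ i) =
      ((μ (p ^ i) : ℤ) : ℚ) * ((brG k * (μ : ArithmeticFunction ℚ)) (p ^ i)) /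
        (Nat.totient (p ^ i) : ℚ) := by
  have hp1 : (1 : ℚ) < (p : ℚ) := by exact_mod_cast hp.one_lt
  have hpm1 : (p : ℚ) - 1 ≠ 0 := by linarith
  have hp0 : (p : ℚ) ≠ 0 := by linarith
  rw [mul_moebius_apply_prime_pow _ hp, mul_moebius_apply_prime_pow _ hp]
  match i with
  | 0 => simp
  | 1 =>
    rw [show (1:ℕ)+1 = 2 from rfl, sum_range_succ, sum_range_succ, sum_range_zero,
      sum_range_succ, sum_range_succ, sum_range_zero]
    simp only [pow_zero, pow_one, Nat.sub_self, Nat.sub_zero, brF_apply, brG_apply,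
      Nat.gcd_one_left, Nat.one_dvd, if_true, Nat.totient_one, Nat.cast_one,
      moebius_apply_one, moebius_apply_prime hp]
    have hφ : (Nat.totient p : ℚ) = (p : ℚ) - 1 := by
      rw [Nat.totient_prime hp]; push_cast [Nat.cast_sub hp.one_lt.le]; ring
    by_cases hdvd : p ∣ k
    · rw [if_neg (by rw [Nat.gcd_eq_left hdvd]; exact hp.ne_one), if_pos hdvd, hφ]
      field_simp
      ring
    · rw [if_pos (hp.coprime_iff_not_dvd.2 hdvd), if_neg hdvd, hφ]
      field_simp
      push_cast
      ring
  | (m + 2) =>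
    rw [moebius_apply_prime_pow hp (by omega), if_neg (by omega)]
    rw [show m + 2 + 1 = m + 3 from rfl,
      sum_trunc (fun j => brF k (p ^ j)) hp m, sum_trunc (fun j => brG k (p ^ j)) hp m]
    simp only [brF_apply, Int.cast_zero, zero_mul, zero_div]
    by_cases hdvd : p ∣ k
    · have hg : ∀ j : ℕ, Nat.gcd (p ^ (j + 1)) k ≠ 1 := by
        intro j h
        exact hp.ne_one (Nat.eq_one_of_dvd_one (h ▸ Nat.dvd_gcd (dvd_pow_self p (Nat.succ_ne_zero j)) hdvd))
      rw [if_neg (hg m), if_neg (hg (m + 1))]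
      simp
    · have hcop : ∀ j : ℕ, Nat.gcd (p ^ j) k = 1 :=
        fun j => Nat.Coprime.pow_left j (hp.coprime_iff_not_dvd.2 hdvd)
      rw [if_pos (hcop (m + 1)), if_pos (hcop (m + 2))]
      rw [moebius_apply_prime hp]
      have hφ1 : (Nat.totient (p ^ (m + 1)) : ℚ) = (p : ℚ) ^ m * ((p : ℚ) - 1) := by
        rw [Nat.totient_prime_pow hp (by omega)]
        push_cast [Nat.cast_sub hp.one_lt.le]; ring_nf
      have hφ2 : (Nat.totient (p ^ (m + 2)) : ℚ) = (p : ℚ) ^ (m + 1) * ((p : ℚ) - 1) := by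
        rw [Nat.totient_prime_pow hp (by omega)]
        push_cast [Nat.cast_sub hp.one_lt.le]; ring_nf
      rw [hφ1, hφ2]
      push_cast
      field_simp
      ring

noncomputable def brT : ArithmeticFunction ℚ :=
  ⟨fun d => (Nat.totient d : ℚ), by simp⟩

@[simp] lemma brT_apply (d : ℕ) : brT d = (Nat.totient d : ℚ) := rfl

lemma brF_mult (k : ℕ) : (brF k).IsMultiplicative := by
  constructor
  · simp
  · intro m n cop
    simp only [brF_apply, Nat.coprime_mul_iff_left]
    rcases eq_or_ne (Nat.gcd m k) 1 with h1 | h1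
    · rcases eq_or_ne (Nat.gcd n k) 1 with h2 | h2
      · rw [if_pos ⟨h1, h2⟩, if_pos h1, if_pos h2, Nat.totient_mul cop]
        push_cast
        rw [div_mul_div_comm]
      · rw [if_neg (by tauto), if_pos h1, if_neg h2, mul_zero]
    · rw [if_neg (by tauto), if_neg h1, zero_mul]

lemma brG_mult (k : ℕ) : (brG k).IsMultiplicative := by
  constructor
  · simp
  · intro m n cop
    simp only [brG_apply]
    by_cases h1 : m ∣ k
    · by_cases h2 : n ∣ k
      · rw [if_pos (cop.mul_dvd_of_dvd_of_dvd h1 h2), if_pos h1, if_pos h2]; push_cast; ring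
      · rw [if_neg fun h => h2 ((dvd_mul_left n m).trans h), if_pos h1, if_neg h2, mul_zero]
    · rw [if_neg fun h => h1 ((dvd_mul_right m n).trans h), if_neg h1, zero_mul]

lemma brT_mult : brT.IsMultiplicative :=
  ⟨by simp, fun {m n} cop => by simp [Nat.totient_mul cop]⟩

lemma br_eq (k : ℕ) :
    brF k * (μ : ArithmeticFunction ℚ) =
      (((μ : ArithmeticFunction ℚ)).pmul (brG k * (μ : ArithmeticFunction ℚ))).pdiv brT := by
  rw [ArithmeticFunction.IsMultiplicative.eq_iff_eq_on_prime_powers _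
    ((brF_mult k).mul isMultiplicative_moebius.intCast) _
    ((isMultiplicative_moebius.intCast.pmul
      ((brG_mult k).mul isMultiplicative_moebius.intCast)).pdiv brT_mult)]
  intro p i hp
  rw [pdiv_apply, pmul_apply, brT_apply, intCoe_apply]
  exact br_key hp i

lemma ramanujanSum_eq (n k : ℕ) (hn : 0 < n) :
    ((ramanujanSum n (k : ℤ) : ℤ) : ℚ) = (brG k * (μ : ArithmeticFunction ℚ)) n := by
  rw [ramanujanSum, mul_apply,
    Nat.sum_divisorsAntidiagonal (f := fun x y => brG k x * (μ : ArithmeticFunction ℚ) y)]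
  have hdiv : (Int.gcd (k : ℤ) (n : ℤ)).divisors = n.divisors.filter (· ∣ k) := by
    rw [Int.gcd_natCast_natCast]
    ext a
    simp only [Nat.mem_divisors, Finset.mem_filter, Nat.dvd_gcd_iff]
    constructor
    · rintro ⟨⟨h1, h2⟩, -⟩; exact ⟨⟨h2, hn.ne'⟩, h1⟩
    · rintro ⟨⟨h2, -⟩, h1⟩; exact ⟨⟨h1, h2⟩, Nat.gcd_ne_zero_right hn.ne'⟩
  rw [hdiv, Finset.sum_filter]
  push_cast
  refine Finset.sum_congr rfl fun d hd => ?_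
  simp only [brG_apply, intCoe_apply]
  split <;> simp

theorem brauer_rademacher (n k : ℕ) (hn : 0 < n) (hk : 0 < k) :
    ∑ d ∈ n.divisors.filter (fun d => Nat.gcd d k = 1),
        (d : ℚ) * (μ (n / d) : ℚ) / (Nat.totient d : ℚ) =
      (μ n : ℚ) * (ramanujanSum n (k : ℤ) : ℚ) / (Nat.totient n : ℚ) := by
  have hL : ∑ d ∈ n.divisors.filter (fun d => Nat.gcd d k = 1),
      (d : ℚ) * (μ (n / d) : ℚ) / (Nat.totient d : ℚ)
      = (brF k * (μ : ArithmeticFunction ℚ)) n := by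
    rw [mul_apply,
      Nat.sum_divisorsAntidiagonal (f := fun x y => brF k x * (μ : ArithmeticFunction ℚ) y),
      Finset.sum_filter]
    refine Finset.sum_congr rfl fun d hd => ?_
    simp only [brF_apply, intCoe_apply]
    split
    · ring
    · simp
  rw [hL, br_eq, pdiv_apply, pmul_apply, brT_apply, intCoe_apply, ← ramanujanSum_eq n k hn]
end

section
/- For integers a_1,…,a_r and positive integers m_1,…,m_r with m = lcm(m_1,…,m_r), (1/m)·Σ_{k=1}^{m} c_{m_1}(k−a_1)···c_{m_r}(k−a_r) = Σ over d_1|m_1,…,d_r|m_r with gcd(d_i,d_j) | a_i − a_j for all i,j, of d_1 μ(m_1/d_1)···d_r μ(m_r/d_r)/lcm(d_1,…,d_r). -/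
open Finset ArithmeticFunction
open scoped ArithmeticFunction.Moebius

-- binary distributivity
lemma my_gcd_lcm_distrib {a b c : ℕ} (ha : a ≠ 0) (hb : b ≠ 0) (hc : c ≠ 0) :
    Nat.gcd a (Nat.lcm b c) = Nat.lcm (Nat.gcd a b) (Nat.gcd a c) := by
  have hbc : Nat.lcm b c ≠ 0 := Nat.lcm_ne_zero hb hc
  have hab : Nat.gcd a b ≠ 0 := Nat.gcd_ne_zero_left ha
  have hac : Nat.gcd a c ≠ 0 := Nat.gcd_ne_zero_left ha
  apply Nat.dvd_antisymm
  · rw [← Nat.factorization_le_iff_dvd (Nat.gcd_ne_zero_left ha) (Nat.lcm_ne_zero hab hac),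
      Nat.factorization_gcd ha hbc, Nat.factorization_lcm hab hac,
      Nat.factorization_lcm hb hc, Nat.factorization_gcd ha hb, Nat.factorization_gcd ha hc]
    intro p
    simp only [Finsupp.inf_apply, Finsupp.sup_apply]
    omega
  · rw [← Nat.factorization_le_iff_dvd (Nat.lcm_ne_zero hab hac) (Nat.gcd_ne_zero_left ha),
      Nat.factorization_gcd ha hbc, Nat.factorization_lcm hab hac,
      Nat.factorization_lcm hb hc, Nat.factorization_gcd ha hb, Nat.factorization_gcd ha hc]
    intro p
    simp only [Finsupp.inf_apply, Finsupp.sup_apply]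
    omega

lemma my_lcm_univ_succ {r : ℕ} (d : Fin (r+1) → ℕ) :
    Finset.univ.lcm d = Nat.lcm (d 0) (Finset.univ.lcm (d ∘ Fin.succ)) := by
  rw [Fin.univ_succ, Finset.cons_eq_insert, Finset.lcm_insert]
  simp [Finset.lcm, Multiset.map_map]
  rfl

lemma my_lcm_ne_zero {r : ℕ} {d : Fin r → ℕ} (hd : ∀ i, d i ≠ 0) :
    Finset.univ.lcm d ≠ 0 := by
  induction r with
  | zero => simp [Finset.lcm]
  | succ n ih =>
      rw [my_lcm_univ_succ]
      exact Nat.lcm_ne_zero (hd 0) (ih fun i => hd i.succ)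

lemma my_gcd_lcm_univ {r : ℕ} (a : ℕ) (ha : a ≠ 0) (d : Fin r → ℕ) (hd : ∀ i, d i ≠ 0) :
    Nat.gcd a (Finset.univ.lcm d) = Finset.univ.lcm (fun i => Nat.gcd a (d i)) := by
  induction r with
  | zero => simp [Finset.lcm, Nat.gcd_one_right]
  | succ n ih =>
      have h1 : (Finset.univ.lcm (d ∘ Fin.succ)) = Finset.univ.lcm (fun i => d (Fin.succ i)) := rfl
      have h2 : ∀ i : Fin n, d (Fin.succ i) ≠ 0 := fun i => hd (Fin.succ i)
      rw [my_lcm_univ_succ, h1, my_gcd_lcm_distrib ha (hd 0) (my_lcm_ne_zero h2),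
        ih (fun i => d (Fin.succ i)) h2, my_lcm_univ_succ (fun i => Nat.gcd a (d i))]
      rfl

lemma my_crt2 (n M : ℕ) (a b : ℤ) (h : (Nat.gcd n M : ℤ) ∣ a - b) :
    ∃ k : ℤ, (n : ℤ) ∣ k - a ∧ (M : ℤ) ∣ k - b := by
  obtain ⟨t, ht⟩ := h
  have hg : (Nat.gcd n M : ℤ) = (n : ℤ) * Int.gcdA n M + (M : ℤ) * Int.gcdB n M := by
    have := Int.gcd_eq_gcd_ab (n : ℤ) (M : ℤ)
    rwa [Int.gcd_natCast_natCast] at this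
  refine ⟨a - (n : ℤ) * Int.gcdA n M * t, ⟨-(Int.gcdA n M * t), by ring⟩, ?_⟩
  refine ⟨Int.gcdB n M * t, ?_⟩
  have : a - b = ((n : ℤ) * Int.gcdA n M + (M : ℤ) * Int.gcdB n M) * t := by rw [← hg]; exact ht
  linarith [this]

lemma my_crt {r : ℕ} (d : Fin r → ℕ) (hd : ∀ i, d i ≠ 0) (a : Fin r → ℤ)
    (h : ∀ i j, (Nat.gcd (d i) (d j) : ℤ) ∣ a i - a j) :
    ∃ k : ℤ, ∀ i, (d i : ℤ) ∣ k - a i := by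
  induction r with
  | zero => exact ⟨0, fun i => i.elim0⟩
  | succ n ih =>
      obtain ⟨k0, hk0⟩ := ih (fun i => d (Fin.succ i)) (fun i => hd (Fin.succ i))
        (fun i => a (Fin.succ i)) (fun i j => h (Fin.succ i) (Fin.succ j))
      set L := Finset.univ.lcm (fun i : Fin n => d (Fin.succ i)) with hL
      have hgd : (Nat.gcd (d 0) L : ℤ) ∣ a 0 - k0 := by
        rw [hL, my_gcd_lcm_univ (d 0) (hd 0) _ (fun i => hd (Fin.succ i))]
        rw [Int.natCast_dvd]
        apply Finset.lcm_dvd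
        intro i _
        rw [← Int.natCast_dvd]
        have h1 : (Nat.gcd (d 0) (d (Fin.succ i)) : ℤ) ∣ a 0 - a (Fin.succ i) := h 0 (Fin.succ i)
        have h2 : (Nat.gcd (d 0) (d (Fin.succ i)) : ℤ) ∣ a (Fin.succ i) - k0 := by
          have : (Nat.gcd (d 0) (d (Fin.succ i)) : ℤ) ∣ (d (Fin.succ i) : ℤ) :=
            Int.natCast_dvd_natCast.mpr (Nat.gcd_dvd_right _ _)
          exact dvd_sub_comm.mp (dvd_trans this (hk0 i))
        have := dvd_add h1 h2
        simpa [sub_add_sub_cancel] using this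
      obtain ⟨k, hk1, hk2⟩ := my_crt2 (d 0) L (a 0) k0 hgd
      refine ⟨k, fun i => ?_⟩
      refine Fin.cases ?_ ?_ i
      · exact hk1
      · intro j
        have hdL : ((d (Fin.succ j) : ℤ)) ∣ (L : ℤ) :=
          Int.natCast_dvd_natCast.mpr (Finset.dvd_lcm (Finset.mem_univ j))
        have : (d (Fin.succ j) : ℤ) ∣ k - k0 := dvd_trans hdL hk2
        have := dvd_add this (hk0 j)
        simpa [sub_add_sub_cancel] using this

lemma my_count {r : ℕ} (d : Fin r → ℕ) (hd : ∀ i, d i ≠ 0) (k0 : ℤ) (M : ℕ)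
    (hLM : Finset.univ.lcm d ∣ M) :
    ((Finset.Icc 1 M).filter (fun k : ℕ => ((Finset.univ.lcm d : ℕ) : ℤ) ∣ (k : ℤ) - k0)).card
      = M / Finset.univ.lcm d := by
  set L := Finset.univ.lcm d with hLdef
  have hL : L ≠ 0 := my_lcm_ne_zero hd
  have hLpos : 0 < L := Nat.pos_of_ne_zero hL
  obtain ⟨t, ht⟩ := hLM
  set v : ℕ := (k0 % L).toNat with hv
  have hvz : (v : ℤ) = k0 % L := Int.toNat_of_nonneg (Int.emod_nonneg k0 (by exact_mod_cast hL))
  have hIcc : Finset.Icc 1 M = Finset.Ioc 0 M := by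
    rw [← Finset.Icc_add_one_left_eq_Ioc, zero_add]
  have hcond : ∀ k : ℕ, (k ≡ v [MOD L] ↔ (L : ℤ) ∣ (k : ℤ) - k0) := by
    intro k
    rw [← Int.natCast_modEq_iff]
    have hvk : (v : ℤ) ≡ k0 [ZMOD (L : ℤ)] := by
      rw [hvz]; exact Int.emod_emod_of_dvd _ dvd_rfl
    constructor
    · intro h
      exact dvd_sub_comm.mp (Int.modEq_iff_dvd.mp (h.trans hvk))
    · intro h
      exact (Int.modEq_iff_dvd.mpr (dvd_sub_comm.mp h)).trans hvk.symm
  rw [hIcc, filter_congr (fun k _ => by rw [← hcond k])]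
  have hLQ : ((L : ℚ)) ≠ 0 := Nat.cast_ne_zero.mpr hL
  have key : ((M : ℚ) - v) / (L : ℚ) = (((0:ℕ) : ℚ) - v) / (L : ℚ) + (t : ℤ) := by
    rw [ht]; push_cast; field_simp; ring
  have hcard := Nat.Ioc_filter_modEq_card 0 M hLpos v
  rw [key, Int.floor_add_intCast] at hcard
  have hML : M / L = t := by rw [ht, Nat.mul_div_cancel_left _ hLpos]
  rw [hML]
  omega

lemma my_ram (n : ℕ) (hn : n ≠ 0) (k : ℤ) :
    ramanujanSum n k = ∑ d ∈ n.divisors, if (d : ℤ) ∣ k then (d : ℤ) * μ (n / d) else 0 := by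
  rw [ramanujanSum, ← Finset.sum_filter]
  congr 1
  ext e
  have hg : Int.gcd k n ≠ 0 := by
    simp only [Int.gcd, Int.natAbs_natCast]
    exact fun h => hn (by simpa using (Nat.eq_zero_of_gcd_eq_zero_right h))
  simp only [Nat.mem_divisors, Finset.mem_filter, Int.gcd, Int.natAbs_natCast]
  rw [Nat.dvd_gcd_iff, ← Int.natCast_dvd]
  constructor
  · rintro ⟨⟨h1, h2⟩, _⟩; exact ⟨⟨h2, hn⟩, h1⟩
  · rintro ⟨⟨h2, _⟩, h1⟩; exact ⟨⟨h1, h2⟩, by simpa [Int.gcd, Int.natAbs_natCast] using hg⟩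

lemma my_inner {r : ℕ} (a : Fin r → ℤ) (dd : Fin r → ℕ) (hdd : ∀ i, dd i ≠ 0) (M : ℕ)
    (hLM : Finset.univ.lcm dd ∣ M) :
    ((Finset.Icc 1 M).filter (fun k : ℕ => ∀ i, ((dd i : ℤ)) ∣ (k : ℤ) - a i)).card
    = if ∀ i j, (Nat.gcd (dd i) (dd j) : ℤ) ∣ a i - a j then M / Finset.univ.lcm dd else 0 := by
  by_cases hc : ∀ i j, (Nat.gcd (dd i) (dd j) : ℤ) ∣ a i - a j
  · rw [if_pos hc]
    obtain ⟨k0, hk0⟩ := my_crt dd hdd a hc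
    rw [← my_count dd hdd k0 M hLM]
    congr 1
    apply Finset.filter_congr
    intro k _
    constructor
    · intro h
      rw [Int.natCast_dvd]
      apply Finset.lcm_dvd
      intro i _
      rw [← Int.natCast_dvd]
      have := dvd_sub (h i) (hk0 i)
      simpa [sub_sub_sub_cancel_right] using this
    · intro h i
      have h1 : (dd i : ℤ) ∣ (k : ℤ) - k0 :=
        dvd_trans (Int.natCast_dvd_natCast.mpr (Finset.dvd_lcm (Finset.mem_univ i))) h
      have := dvd_add h1 (hk0 i)
      simpa [sub_add_sub_cancel] using this
  · rw [if_neg hc]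
    rw [Finset.card_eq_zero, Finset.filter_eq_empty_iff]
    intro k _ hk
    apply hc
    intro i j
    have h1 : (Nat.gcd (dd i) (dd j) : ℤ) ∣ (k : ℤ) - a i :=
      dvd_trans (Int.natCast_dvd_natCast.mpr (Nat.gcd_dvd_left _ _)) (hk i)
    have h2 : (Nat.gcd (dd i) (dd j) : ℤ) ∣ (k : ℤ) - a j :=
      dvd_trans (Int.natCast_dvd_natCast.mpr (Nat.gcd_dvd_right _ _)) (hk j)
    have := dvd_sub h2 h1
    simpa [sub_sub_sub_cancel_left] using this

theorem eval_E_a {r : ℕ} (a : Fin r → ℤ) (m : Fin r → ℕ) (hm : ∀ i, 0 < m i) :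
    (1 / ((Finset.univ.lcm m : ℕ) : ℚ)) *
      ∑ k ∈ Icc 1 (Finset.univ.lcm m),
        ∏ i, (ramanujanSum (m i) ((k : ℤ) - a i) : ℚ) =
    ∑ d ∈ Fintype.piFinset (fun i => (m i).divisors),
      if ∀ i j, (Nat.gcd (d i) (d j) : ℤ) ∣ a i - a j then
        (∏ i, (d i : ℚ) * (μ (m i / d i) : ℚ)) / ((Finset.univ.lcm d : ℕ) : ℚ)
      else 0 := by
  classical
  have hm0 : ∀ i, m i ≠ 0 := fun i => (hm i).ne'
  set M := Finset.univ.lcm m with hMdef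
  have hM0 : M ≠ 0 := my_lcm_ne_zero hm0
  have hMQ : (M : ℚ) ≠ 0 := Nat.cast_ne_zero.mpr hM0
  have step1 : ∀ k : ℕ, (∏ i, (ramanujanSum (m i) ((k : ℤ) - a i) : ℚ)) =
      ∑ d ∈ Fintype.piFinset (fun i => (m i).divisors),
        if ∀ i, ((d i : ℤ)) ∣ (k : ℤ) - a i then
          ∏ i, (d i : ℚ) * (μ (m i / d i) : ℚ) else 0 := by
    intro k
    have h1 : ∀ i : Fin r, (ramanujanSum (m i) ((k : ℤ) - a i) : ℚ) =
        ∑ e ∈ (m i).divisors, if (e : ℤ) ∣ (k : ℤ) - a i then (e : ℚ) * (μ (m i / e) : ℚ)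
          else 0 := by
      intro i
      rw [my_ram (m i) (hm0 i)]
      push_cast [apply_ite (fun z : ℤ => (z : ℚ))]
      rfl
    rw [Finset.prod_congr rfl (fun i _ => h1 i), Finset.prod_univ_sum]
    exact Finset.sum_congr rfl fun d _ => by rw [Finset.prod_ite_zero]; simp
  rw [Finset.sum_congr rfl (fun k _ => step1 k), Finset.sum_comm, Finset.mul_sum]
  apply Finset.sum_congr rfl
  intro d hd
  have hdmem : ∀ i, d i ∈ (m i).divisors := fun i => Fintype.mem_piFinset.mp hd i
  have hd0 : ∀ i, d i ≠ 0 := fun i => (Nat.pos_of_mem_divisors (hdmem i)).ne'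
  have hLM : Finset.univ.lcm d ∣ M :=
    Finset.lcm_dvd fun i _ =>
      dvd_trans (Nat.mem_divisors.mp (hdmem i)).1 (Finset.dvd_lcm (Finset.mem_univ i))
  have hsum : (∑ k ∈ Icc 1 M, if ∀ i, ((d i : ℤ)) ∣ (k : ℤ) - a i then
      ∏ i, (d i : ℚ) * (μ (m i / d i) : ℚ) else 0) =
      (((Finset.Icc 1 M).filter (fun k : ℕ => ∀ i, ((d i : ℤ)) ∣ (k : ℤ) - a i)).card : ℚ) *
        ∏ i, (d i : ℚ) * (μ (m i / d i) : ℚ) := by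
    rw [← Finset.sum_filter, Finset.sum_const, nsmul_eq_mul]
  rw [hsum, my_inner a d hd0 M hLM]
  by_cases hc : ∀ i j, (Nat.gcd (d i) (d j) : ℤ) ∣ a i - a j
  · rw [if_pos hc, if_pos hc]
    have hL0 : Finset.univ.lcm d ≠ 0 := my_lcm_ne_zero hd0
    have hLQ : ((Finset.univ.lcm d : ℕ) : ℚ) ≠ 0 := Nat.cast_ne_zero.mpr hL0
    rw [Nat.cast_div hLM hLQ]
    field_simp
  · rw [if_neg hc, if_neg hc]
    simp
end

section
/- For a single integer polynomial g and positive integer m, Σ_{1 ≤ k ≤ m, gcd(k,m)=1} c_m(g(k)) = φ(m)·Σ_{d | m} [d μ(m/d)/φ(d)]·η_g(d), where η_g(d) is the number of x mod d with g(x) ≡ 0 (mod d) and gcd(x,d)=1. -/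
open Finset ArithmeticFunction
open scoped ArithmeticFunction.Moebius

/-- Fibers of a surjective group hom have cardinality `|G|/|H|`. -/
lemma card_fiber_mul {G H : Type*} [Group G] [Group H] [Fintype G] [Fintype H]
    [DecidableEq H] (f : G →* H) (hf : Function.Surjective f) (h : H) :
    (Finset.univ.filter (fun g => f g = h)).card * Fintype.card H = Fintype.card G := by
  obtain ⟨g0, hg0⟩ := hf h
  have e1 : (Finset.univ.filter (fun g => f g = h)).card = Nat.card f.ker := by
    rw [← Fintype.card_subtype]
    rw [← Nat.card_eq_fintype_card]
    refine Nat.card_congr ⟨fun g => ⟨g0⁻¹ * g.1, ?_⟩, fun k => ⟨g0 * k.1, ?_⟩, ?_, ?_⟩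
    · have := g.2
      simp only [MonoidHom.mem_ker, map_mul, map_inv, this, hg0, inv_mul_cancel]
    · have := k.2
      simp only [MonoidHom.mem_ker] at this
      simp [map_mul, this, hg0]
    · intro g; simp
    · intro k; simp
  have e2 : Nat.card G = Nat.card H * Nat.card f.ker := by
    rw [← Nat.card_congr (QuotientGroup.quotientKerEquivOfSurjective f hf).toEquiv]
    exact Subgroup.card_eq_card_quotient_mul_card_subgroup f.ker
  rw [e1, ← Nat.card_eq_fintype_card, ← Nat.card_eq_fintype_card, e2, mul_comm]

/-- The number of `k ∈ [1, m]` coprime to `m` with `k ≡ x (mod d)` is `φ(m)/φ(d)`. -/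
lemma fiber_card (m d : ℕ) (hm : 0 < m) (hd : d ∣ m) (x : ℕ) (hx : x < d)
    (hxd : Nat.gcd x d = 1) :
    ((Icc 1 m).filter (fun k => Nat.gcd k m = 1 ∧ k % d = x)).card * d.totient
      = m.totient := by
  have hd0 : 0 < d := Nat.pos_of_dvd_of_pos hd hm
  haveI : NeZero m := ⟨hm.ne'⟩
  haveI : NeZero d := ⟨hd0.ne'⟩
  set f : (ZMod m)ˣ →* (ZMod d)ˣ := ZMod.unitsMap hd with hf
  have hfs : Function.Surjective f := ZMod.unitsMap_surjective hd
  set ux : (ZMod d)ˣ := ZMod.unitOfCoprime x hxd with hux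
  have key : ((Icc 1 m).filter (fun k => Nat.gcd k m = 1 ∧ k % d = x)).card
      = (Finset.univ.filter (fun u : (ZMod m)ˣ => f u = ux)).card := by
    apply Finset.card_bij (fun k hk => ZMod.unitOfCoprime k
      (by simp only [mem_filter] at hk; exact hk.2.1))
    · intro k hk
      simp only [mem_filter, mem_Icc] at hk
      simp only [mem_filter, mem_univ, true_and]
      apply Units.ext
      have : (f (ZMod.unitOfCoprime k hk.2.1) : ZMod d)
          = ((k : ℕ) : ZMod d) := by
        simp [hf, ZMod.unitsMap_def, ZMod.unitOfCoprime]
      rw [this]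
      have : (ux : ZMod d) = ((x : ℕ) : ZMod d) := rfl
      rw [this, ZMod.natCast_eq_natCast_iff', hk.2.2, Nat.mod_eq_of_lt hx]
    · intro k hk k' hk' heq
      simp only [mem_filter, mem_Icc] at hk hk'
      have h1 : ((k : ℕ) : ZMod m) = ((k' : ℕ) : ZMod m) := by
        have := congrArg Units.val heq
        simpa using this
      rw [ZMod.natCast_eq_natCast_iff'] at h1
      rcases lt_or_eq_of_le hk.1.2 with h | h <;>
        rcases lt_or_eq_of_le hk'.1.2 with h' | h'
      · rwa [Nat.mod_eq_of_lt h, Nat.mod_eq_of_lt h'] at h1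
      · rw [Nat.mod_eq_of_lt h, h', Nat.mod_self] at h1; omega
      · rw [Nat.mod_eq_of_lt h', h, Nat.mod_self] at h1; omega
      · omega
    · intro u hu
      simp only [mem_filter, mem_univ, true_and] at hu
      set v := (u : ZMod m).val with hv
      have hvm : v < m := ZMod.val_lt _
      have hvcop : Nat.Coprime v m := ZMod.val_coe_unit_coprime u
      by_cases hv0 : v = 0
      · -- then m = 1
        have hm1 : m = 1 := by
          have := hvcop
          rw [hv0] at this
          simpa [Nat.Coprime] using this
        refine ⟨m, ?_, ?_⟩
        · simp only [mem_filter, mem_Icc]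
          refine ⟨⟨hm, le_refl m⟩, by simp [hm1], ?_⟩
          have hd1 : d = 1 := Nat.dvd_one.mp (hm1 ▸ hd)
          omega
        · apply Units.ext
          have : Subsingleton (ZMod m) := by rw [hm1]; infer_instance
          exact Subsingleton.elim _ _
      · refine ⟨v, ?_, ?_⟩
        · have hkm : ((v : ℕ) : ZMod m) = (u : ZMod m) :=
            ZMod.natCast_rightInverse (u : ZMod m)
          simp only [mem_filter, mem_Icc]
          refine ⟨⟨Nat.one_le_iff_ne_zero.mpr hv0, hvm.le⟩, hvcop, ?_⟩
          -- k % d = x from f u = ux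
          have h2 : ((v : ℕ) : ZMod d) = ((x : ℕ) : ZMod d) := by
            have h3 : (f u : ZMod d) = (ux : ZMod d) := congrArg _ hu
            have h4 : (f u : ZMod d) = ZMod.castHom hd (ZMod d) (u : ZMod m) := rfl
            rw [h4] at h3
            rw [← hkm] at h3
            rw [map_natCast] at h3
            exact h3
          rw [ZMod.natCast_eq_natCast_iff'] at h2
          rwa [Nat.mod_eq_of_lt hx] at h2
        · apply Units.ext
          simp only [ZMod.unitOfCoprime]
          exact ZMod.natCast_rightInverse (u : ZMod m)
  rw [key, ← ZMod.card_units_eq_totient d, ← ZMod.card_units_eq_totient m]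
  exact card_fiber_mul f hfs ux

/-- Main counting lemma. -/
lemma count_key (g : Polynomial ℤ) (m d : ℕ) (hm : 0 < m) (hd : d ∣ m) :
    ((Icc 1 m).filter (fun k => Nat.gcd k m = 1 ∧ (d:ℤ) ∣ g.eval (k:ℤ))).card * d.totient
      = m.totient *
        ((range d).filter (fun x : ℕ => (d : ℤ) ∣ g.eval (x : ℤ) ∧ Nat.gcd x d = 1)).card := by
  have hd0 : 0 < d := Nat.pos_of_dvd_of_pos hd hm
  set T := (range d).filter (fun x : ℕ => (d : ℤ) ∣ g.eval (x : ℤ) ∧ Nat.gcd x d = 1) with hT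
  set S := (Icc 1 m).filter (fun k => Nat.gcd k m = 1 ∧ (d:ℤ) ∣ g.eval (k:ℤ)) with hS
  -- congruence transfer
  have hmod : ∀ k : ℕ, ((d:ℤ) ∣ g.eval ((k % d : ℕ) : ℤ) ↔ (d:ℤ) ∣ g.eval (k:ℤ)) := by
    intro k
    have hdvd : (d : ℤ) ∣ (k : ℤ) - ((k % d : ℕ) : ℤ) := by
      rw [Int.natCast_mod]
      exact Int.dvd_self_sub_of_emod_eq rfl
    have h2 : (d : ℤ) ∣ g.eval (k:ℤ) - g.eval ((k % d : ℕ) : ℤ) :=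
      dvd_trans hdvd (Polynomial.sub_dvd_eval_sub _ _ g)
    constructor
    · intro h; have := dvd_add h2 h; simpa using this
    · intro h; have := dvd_sub h h2; simpa using this
  have hgcd : ∀ k : ℕ, Nat.gcd k m = 1 → Nat.gcd (k % d) d = 1 := by
    intro k hk
    have h1 : Nat.gcd (k % d) d = Nat.gcd k d := by
      rw [← Nat.gcd_rec]; exact Nat.gcd_comm d k
    rw [h1]
    exact Nat.Coprime.coprime_dvd_right hd hk
  have hmap : ∀ k ∈ S, k % d ∈ T := by
    intro k hk
    simp only [hS, mem_filter, mem_Icc] at hk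
    simp only [hT, mem_filter, mem_range]
    exact ⟨Nat.mod_lt _ hd0, (hmod k).mpr hk.2.2, hgcd k hk.2.1⟩
  have hsplit : S.card = ∑ x ∈ T, (S.filter (fun k => k % d = x)).card :=
    Finset.card_eq_sum_card_fiberwise hmap
  have hfib : ∀ x ∈ T, (S.filter (fun k => k % d = x)).card * d.totient = m.totient := by
    intro x hx
    simp only [hT, mem_filter, mem_range] at hx
    have : S.filter (fun k => k % d = x)
        = (Icc 1 m).filter (fun k => Nat.gcd k m = 1 ∧ k % d = x) := by
      ext k
      simp only [hS, mem_filter, mem_Icc]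
      constructor
      · rintro ⟨⟨h1, h2, h3⟩, h4⟩
        exact ⟨h1, h2, h4⟩
      · rintro ⟨h1, h2, h3⟩
        refine ⟨⟨h1, h2, ?_⟩, h3⟩
        rw [← hmod k, h3]
        exact hx.2.1
    rw [this]
    exact fiber_card m d hm hd x hx.1 hx.2.2
  calc S.card * d.totient = ∑ x ∈ T, (S.filter (fun k => k % d = x)).card * d.totient := by
        rw [hsplit, Finset.sum_mul]
    _ = ∑ x ∈ T, m.totient := Finset.sum_congr rfl hfib
    _ = m.totient * T.card := by rw [Finset.sum_const, smul_eq_mul, mul_comm]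

lemma ramanujanSum_eq_s11 (m : ℕ) (hm : 0 < m) (n : ℤ) :
    ramanujanSum m n = ∑ d ∈ m.divisors, if (d:ℤ) ∣ n then (d : ℤ) * μ (m / d) else 0 := by
  rw [ramanujanSum, ← Finset.sum_filter]
  congr 1
  ext e
  simp only [Nat.mem_divisors, mem_filter]
  constructor
  · intro ⟨h1, h2⟩
    have hem : e ∣ m := by
      have h2 : (e : ℤ) ∣ (m : ℤ) := (Int.natCast_dvd_natCast.mpr h1).trans (Int.gcd_dvd_right _ _)
      exact_mod_cast h2
    have hen : (e : ℤ) ∣ n := by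
      have : (e : ℤ) ∣ (Int.gcd n m : ℤ) := Int.natCast_dvd_natCast.mpr h1
      exact this.trans (Int.gcd_dvd_left _ _)
    exact ⟨⟨hem, hm.ne'⟩, hen⟩
  · intro ⟨⟨h1, _⟩, h2⟩
    constructor
    · have h3 : (e : ℤ) ∣ (Int.gcd n (m : ℤ) : ℤ) :=
        Int.dvd_coe_gcd h2 (Int.natCast_dvd_natCast.mpr h1)
      exact_mod_cast h3
    · intro h0
      rw [Int.gcd_eq_zero_iff] at h0
      have : m = 0 := by exact_mod_cast h0.2
      omega

theorem eval_R_g (g : Polynomial ℤ) (m : ℕ) (hm : 0 < m) :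
    ∑ k ∈ (Icc 1 m).filter (fun k => Nat.gcd k m = 1),
      (ramanujanSum m (g.eval (k : ℤ)) : ℚ) =
    (Nat.totient m : ℚ) *
      ∑ d ∈ m.divisors,
        (d : ℚ) * (μ (m / d) : ℚ) / (Nat.totient d : ℚ) *
          (((Finset.range d).filter
            (fun x : ℕ => (d : ℤ) ∣ g.eval (x : ℤ) ∧ Nat.gcd x d = 1)).card : ℚ) := by
  have step1 : ∑ k ∈ (Icc 1 m).filter (fun k => Nat.gcd k m = 1),
      (ramanujanSum m (g.eval (k : ℤ)) : ℚ)
      = ∑ d ∈ m.divisors, (d : ℚ) * (μ (m / d) : ℚ) *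
          (((Icc 1 m).filter (fun k => Nat.gcd k m = 1 ∧ (d:ℤ) ∣ g.eval (k:ℤ))).card : ℚ) := by
    have : ∀ k : ℕ, (ramanujanSum m (g.eval (k : ℤ)) : ℚ)
        = ∑ d ∈ m.divisors, if (d:ℤ) ∣ g.eval (k:ℤ) then (d : ℚ) * (μ (m / d) : ℚ) else 0 := by
      intro k
      rw [ramanujanSum_eq_s11 m hm]
      push_cast
      rfl
    simp_rw [this]
    rw [Finset.sum_comm]
    apply Finset.sum_congr rfl
    intro d _
    rw [← Finset.sum_filter, Finset.filter_filter, Finset.sum_const, nsmul_eq_mul, mul_comm]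
  rw [step1, Finset.mul_sum]
  apply Finset.sum_congr rfl
  intro d hd
  have hdm : d ∣ m := (Nat.mem_divisors.mp hd).1
  have hd0 : 0 < d := Nat.pos_of_dvd_of_pos hdm hm
  have htd : (0 : ℚ) < (d.totient : ℚ) := by exact_mod_cast Nat.totient_pos.mpr hd0
  have hkey := count_key g m d hm hdm
  have hkeyQ : (((Icc 1 m).filter (fun k => Nat.gcd k m = 1 ∧ (d:ℤ) ∣ g.eval (k:ℤ))).card : ℚ)
      * (d.totient : ℚ) = (m.totient : ℚ) *
        (((range d).filter (fun x : ℕ => (d : ℤ) ∣ g.eval (x : ℤ) ∧ Nat.gcd x d = 1)).card : ℚ) := by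
    exact_mod_cast hkey
  have hc1 : (((Icc 1 m).filter (fun k => Nat.gcd k m = 1 ∧ (d:ℤ) ∣ g.eval (k:ℤ))).card : ℚ)
      = (m.totient : ℚ) *
        (((range d).filter (fun x : ℕ => (d : ℤ) ∣ g.eval (x : ℤ) ∧ Nat.gcd x d = 1)).card : ℚ)
        / (d.totient : ℚ) := by
    rw [eq_div_iff htd.ne']
    exact hkeyQ
  rw [hc1]
  field_simp
end

section
/- If m_1,…,m_r are pairwise relatively prime positive integers with m = m_1···m_r, and a_1,…,a_r ∈ ℤ, then Σ_{1 ≤ k ≤ m, gcd(k,m)=1} c_{m_1}(k−a_1)···c_{m_r}(k−a_r) = μ(m)·c_{m_1}(a_1)···c_{m_r}(a_r). -/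
open Finset ArithmeticFunction
open scoped ArithmeticFunction.Moebius

lemma int_gcd_congr {k k' : ℤ} {n : ℕ} (h : (n:ℤ) ∣ k - k') : Int.gcd k n = Int.gcd k' n := by
  have key : ∀ a b : ℤ, (n:ℤ) ∣ a - b → Int.gcd a n ∣ Int.gcd b n := by
    intro a b hab
    have h1 : (Int.gcd a n : ℤ) ∣ a := Int.gcd_dvd_left _ _
    have h2 : (Int.gcd a n : ℤ) ∣ (n:ℤ) := Int.gcd_dvd_right _ _
    have h3 : (Int.gcd a n : ℤ) ∣ b := by
      have := dvd_sub h1 (h2.trans hab)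
      simpa using this
    rw [← Int.natCast_dvd_natCast]
    exact Int.dvd_coe_gcd h3 h2
  exact Nat.dvd_antisymm (key _ _ h) (key _ _ (by simpa using dvd_neg.mpr h))

lemma ramanujanSum_congr {n : ℕ} {k k' : ℤ} (h : (n:ℤ) ∣ k - k') :
    ramanujanSum n k = ramanujanSum n k' := by
  unfold ramanujanSum; rw [int_gcd_congr h]

lemma ramanujanSum_eq_sum_divisors (n : ℕ) (hn : n ≠ 0) (k : ℤ) :
    ramanujanSum n k = ∑ d ∈ n.divisors, if (d:ℤ) ∣ k then (d:ℤ) * μ (n / d) else 0 := by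
  have hg : Int.gcd k n ∣ n := Int.natCast_dvd_natCast.mp (Int.gcd_dvd_right _ _)
  rw [ramanujanSum, ← Nat.divisors_filter_dvd_of_dvd hn hg, sum_filter]
  refine Finset.sum_congr rfl fun d hd => ?_
  have hdn : d ∣ n := (Nat.mem_divisors.mp hd).1
  have heq : d ∣ Int.gcd k n ↔ (d:ℤ) ∣ k := by
    rw [Int.gcd, Nat.dvd_gcd_iff, Int.natCast_dvd]
    simp [hdn]
  by_cases h : (d:ℤ) ∣ k <;> simp [h, heq]

lemma ramanujanSum_one (k : ℤ) : ramanujanSum 1 k = 1 := by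
  simp [ramanujanSum, Int.gcd]

/-- auxiliary arithmetic function `d ↦ d·[d ∣ k]` -/
def rsAux (k : ℤ) : ArithmeticFunction ℤ :=
  ⟨fun d => if d ≠ 0 ∧ (d:ℤ) ∣ k then (d:ℤ) else 0, by simp⟩

lemma rsAux_apply (k : ℤ) (d : ℕ) : rsAux k d = if d ≠ 0 ∧ (d:ℤ) ∣ k then (d:ℤ) else 0 := rfl

lemma rsAux_isMultiplicative (k : ℤ) : (rsAux k).IsMultiplicative := by
  constructor
  · simp [rsAux_apply]
  · intro m n h
    rcases eq_or_ne m 0 with rfl | hm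
    · simp [rsAux_apply]
    rcases eq_or_ne n 0 with rfl | hn
    · simp [rsAux_apply]
    have hco : IsCoprime (m:ℤ) (n:ℤ) := Nat.isCoprime_iff_coprime.mpr h
    have hdvd : (m:ℤ) * (n:ℤ) ∣ k ↔ ((m:ℤ) ∣ k ∧ (n:ℤ) ∣ k) := by
      constructor
      · intro hd; exact ⟨(dvd_mul_right _ _).trans hd, (dvd_mul_left _ _).trans hd⟩
      · rintro ⟨h1, h2⟩; exact hco.mul_dvd h1 h2
    by_cases h1 : (m:ℤ) ∣ k <;> by_cases h2 : (n:ℤ) ∣ k <;>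
      simp [rsAux_apply, hm, hn, hdvd, h1, h2, mul_eq_zero]

lemma ramanujanSum_eq_conv (n : ℕ) (hn : n ≠ 0) (k : ℤ) :
    ramanujanSum n k = (rsAux k * (μ : ArithmeticFunction ℤ)) n := by
  rw [ramanujanSum_eq_sum_divisors n hn k, ArithmeticFunction.mul_apply,
    Nat.sum_divisorsAntidiagonal (f := fun x y => rsAux k x * μ y)]
  refine Finset.sum_congr rfl fun d hd => ?_
  have hd0 : d ≠ 0 := Nat.pos_of_mem_divisors hd |>.ne'
  rw [rsAux_apply]
  by_cases h : (d:ℤ) ∣ k <;> simp [h, hd0]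

lemma ramanujanSum_mul {m n : ℕ} (h : Nat.Coprime m n) (hm : m ≠ 0) (hn : n ≠ 0) (k : ℤ) :
    ramanujanSum (m*n) k = ramanujanSum m k * ramanujanSum n k := by
  rw [ramanujanSum_eq_conv _ (mul_ne_zero hm hn), ramanujanSum_eq_conv _ hm,
    ramanujanSum_eq_conv _ hn,
    ((rsAux_isMultiplicative k).mul isMultiplicative_moebius).map_mul_of_coprime h]

lemma sum_units_eq {M : ℕ} [NeZero M] (F : ℕ → ℤ) :
    ∑ u : (ZMod M)ˣ, F ((u : ZMod M).val) =
      ∑ k ∈ (range M).filter (fun k => Nat.gcd k M = 1), F k := by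
  symm
  refine Finset.sum_bij' (fun k hk => ZMod.unitOfCoprime k (mem_filter.mp hk).2)
    (fun u _ => (u : ZMod M).val) (fun k hk => mem_univ _) (fun u _ => ?_) ?_ ?_ ?_
  · refine mem_filter.mpr ⟨mem_range.mpr (ZMod.val_lt _), ZMod.val_coe_unit_coprime u⟩
  · intro k hk
    have hklt : k < M := mem_range.mp (mem_filter.mp hk).1
    simp [ZMod.coe_unitOfCoprime, ZMod.val_natCast, Nat.mod_eq_of_lt hklt]
  · intro u _
    exact Units.ext (by simp [ZMod.coe_unitOfCoprime, ZMod.natCast_zmod_val])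
  · intro k hk
    have hklt : k < M := mem_range.mp (mem_filter.mp hk).1
    simp [ZMod.coe_unitOfCoprime, ZMod.val_natCast, Nat.mod_eq_of_lt hklt]

lemma crt_fst_val {m n : ℕ} [NeZero m] [NeZero n] (h : Nat.Coprime m n)
    (x : ZMod (m * n)) :
    ((ZMod.chineseRemainder h x).1).val = x.val % m := by
  have : NeZero (m * n) := ⟨mul_ne_zero (NeZero.ne m) (NeZero.ne n)⟩
  conv_lhs => rw [← ZMod.natCast_zmod_val x]
  rw [show (ZMod.chineseRemainder h) ((x.val : ℕ) : ZMod (m*n)) = ((x.val : ℕ) : ZMod m × ZMod n) from map_natCast _ _]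
  simp only [Prod.fst_natCast, Prod.snd_natCast, ZMod.val_natCast]

lemma crt_snd_val {m n : ℕ} [NeZero m] [NeZero n] (h : Nat.Coprime m n)
    (x : ZMod (m * n)) :
    ((ZMod.chineseRemainder h x).2).val = x.val % n := by
  have : NeZero (m * n) := ⟨mul_ne_zero (NeZero.ne m) (NeZero.ne n)⟩
  conv_lhs => rw [← ZMod.natCast_zmod_val x]
  rw [show (ZMod.chineseRemainder h) ((x.val : ℕ) : ZMod (m*n)) = ((x.val : ℕ) : ZMod m × ZMod n) from map_natCast _ _]
  simp only [Prod.fst_natCast, Prod.snd_natCast, ZMod.val_natCast]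

lemma sum_units_mul_split {m n : ℕ} [NeZero m] [NeZero n] (h : Nat.Coprime m n)
    (f g : ℕ → ℤ) (hf : ∀ k, f (k % m) = f k) (hg : ∀ k, g (k % n) = g k) :
    ∑ u : (ZMod (m*n))ˣ, f ((u : ZMod (m*n)).val) * g ((u : ZMod (m*n)).val) =
      (∑ v : (ZMod m)ˣ, f ((v : ZMod m).val)) * (∑ w : (ZMod n)ˣ, g ((w : ZMod n).val)) := by
  have : NeZero (m * n) := ⟨mul_ne_zero (NeZero.ne m) (NeZero.ne n)⟩
  let e : (ZMod (m*n))ˣ ≃* (ZMod m)ˣ × (ZMod n)ˣ :=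
    (Units.mapEquiv (ZMod.chineseRemainder h).toMulEquiv).trans MulEquiv.prodUnits
  let e' := e.toEquiv
  have hcoe1 : ∀ u : (ZMod (m*n))ˣ, ((e' u).1 : ZMod m) = (ZMod.chineseRemainder h (u : ZMod (m*n))).1 := fun u => rfl
  have hcoe2 : ∀ u : (ZMod (m*n))ˣ, ((e' u).2 : ZMod n) = (ZMod.chineseRemainder h (u : ZMod (m*n))).2 := fun u => rfl
  calc ∑ u : (ZMod (m*n))ˣ, f ((u : ZMod (m*n)).val) * g ((u : ZMod (m*n)).val)
      = ∑ p : (ZMod m)ˣ × (ZMod n)ˣ, f ((p.1 : ZMod m).val) * g ((p.2 : ZMod n).val) := by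
        refine Fintype.sum_equiv e' _ _ fun u => ?_
        rw [hcoe1, hcoe2, crt_fst_val, crt_snd_val, hf, hg]
    _ = ∑ v : (ZMod m)ˣ, ∑ w : (ZMod n)ˣ, f ((v : ZMod m).val) * g ((w : ZMod n).val) :=
        Fintype.sum_prod_type _
    _ = _ := by rw [← Finset.sum_mul_sum]

lemma ramanujanSum_prime_pow {p : ℕ} (e : ℕ) (hp : p.Prime) (he : e ≠ 0) (x : ℤ) :
    ramanujanSum (p^e) x = (if (p:ℤ)^e ∣ x then (p:ℤ)^e else 0)
      - (if (p:ℤ)^(e-1) ∣ x then (p:ℤ)^(e-1) else 0) := by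
  rw [ramanujanSum_eq_sum_divisors _ (pow_ne_zero e hp.ne_zero) x,
    Nat.divisors_prime_pow hp, Finset.sum_map]
  have hsub : ({e-1, e} : Finset ℕ) ⊆ range (e+1) := by
    intro j hj; simp only [mem_insert, mem_singleton] at hj
    rcases hj with rfl | rfl <;> simp [Nat.lt_succ]
  rw [← Finset.sum_subset hsub ?_]
  · rw [Finset.sum_pair (by omega : e - 1 ≠ e)]
    have h1 : p^e / p^(e-1) = p := by
      rw [Nat.pow_div (by omega) hp.pos, show e - (e-1) = 1 by omega, pow_one]
    have h2 : p^e / p^e = 1 := Nat.div_self (pow_pos hp.pos e)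
    simp only [Function.Embedding.coeFn_mk, h1, h2, moebius_apply_prime hp, moebius_apply_one]
    push_cast
    split_ifs <;> ring
  · intro j hj hj'
    simp only [mem_insert, mem_singleton] at hj'
    simp only [mem_range, Nat.lt_succ] at hj
    push_neg at hj'
    have : p^e / p^j = p^(e-j) := Nat.pow_div hj hp.pos
    have hm : μ (p^(e-j)) = 0 := by
      rw [moebius_apply_prime_pow hp (by omega)]
      rw [if_neg (by omega)]
    simp [Function.Embedding.coeFn_mk, this, hm]

lemma count_mod (m n b : ℕ) (hb : b < m) :
    ((range (m*n)).filter (fun k => k % m = b)).card = n := by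
  have key : ((range (m*n)).filter (fun k => k % m = b)).card = (range n).card := by
    apply Finset.card_bij' (fun k _ => k / m) (fun t _ => b + m * t)
    · intro k hk
      simp only [mem_filter, mem_range] at hk
      exact mem_range.mpr (Nat.div_lt_of_lt_mul (by omega))
    · intro t ht
      simp only [mem_range] at ht
      refine mem_filter.mpr ⟨mem_range.mpr ?_, ?_⟩
      · calc b + m * t < m + m * t := by omega
          _ = m * (t+1) := by ring
          _ ≤ m * n := Nat.mul_le_mul_left m (by omega)
      · simp [Nat.add_mul_mod_self_left, Nat.mod_eq_of_lt hb]
    · intro k hk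
      have h1 := (mem_filter.mp hk).2
      have h2 := Nat.div_add_mod k m
      omega
    · intro t ht
      rw [Nat.add_mul_div_left _ _ (by omega : 0 < m), Nat.div_eq_of_lt hb, zero_add]
  simpa using key

lemma count_coprime_dvd {p e j : ℕ} (hp : p.Prime) (hj1 : 1 ≤ j) (hje : j ≤ e) (a : ℤ) :
    ((range (p^e)).filter (fun k => Nat.gcd k (p^e) = 1 ∧ (p:ℤ)^j ∣ (k:ℤ) - a)).card
      = if (p:ℤ) ∣ a then 0 else p^(e-j) := by
  have hppos := hp.pos
  have hpj : (0:ℤ) < (p:ℤ)^j := by positivity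
  by_cases hpa : (p:ℤ) ∣ a
  · rw [if_pos hpa, Finset.card_eq_zero, Finset.filter_eq_empty_iff]
    rintro k hk ⟨hcop, hdvd⟩
    have hpk : (p:ℤ) ∣ (k:ℤ) := by
      have h1 : (p:ℤ) ∣ (p:ℤ)^j := dvd_pow_self _ (by omega)
      have h2 : (p:ℤ) ∣ (k:ℤ) - a := h1.trans hdvd
      have := dvd_add h2 hpa
      simpa using this
    have hpk' : p ∣ k := Int.natCast_dvd_natCast.mp hpk
    have : p ∣ 1 := hcop ▸ Nat.dvd_gcd hpk' (dvd_pow_self _ (by omega))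
    exact hp.one_lt.ne' (Nat.dvd_one.mp this)
  · rw [if_neg hpa]
    set b := (a % ((p:ℤ)^j)).toNat with hbdef
    have hb0 : (b:ℤ) = a % ((p:ℤ)^j) := Int.toNat_of_nonneg (Int.emod_nonneg a hpj.ne')
    have hblt : b < p^j := by
      have := Int.emod_lt_of_pos a hpj
      rw [← hb0] at this
      exact_mod_cast (by push_cast at this ⊢; exact this : (b:ℤ) < ((p^j : ℕ):ℤ))
    have hmodb : (p:ℤ)^j ∣ (b:ℤ) - a := by
      rw [hb0, Int.emod_def]
      exact ⟨-(a / (p:ℤ)^j), by ring⟩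
    have hpb : ¬ p ∣ b := by
      intro hdvd
      apply hpa
      have h1 : (p:ℤ) ∣ (b:ℤ) := Int.natCast_dvd_natCast.mpr hdvd
      have h2 : (p:ℤ) ∣ (b:ℤ) - a := (dvd_pow_self (p:ℤ) (by omega : j ≠ 0)).trans hmodb
      have := dvd_sub h1 h2
      simpa using this
    have hset : (range (p^e)).filter (fun k => Nat.gcd k (p^e) = 1 ∧ (p:ℤ)^j ∣ (k:ℤ) - a)
        = (range (p^e)).filter (fun k => k % (p^j) = b) := by
      apply Finset.filter_congr
      intro k hk
      constructor
      · rintro ⟨hcop, hdvd⟩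
        have hmod : a ≡ (k:ℤ) [ZMOD ((p:ℤ)^j)] := Int.modEq_iff_dvd.mpr hdvd
        have : (k:ℤ) % ((p:ℤ)^j) = a % ((p:ℤ)^j) := hmod.symm
        have hcast : ((k % p^j : ℕ) : ℤ) = (b:ℤ) := by
          push_cast
          rw [this, ← hb0]
        exact_mod_cast hcast
      · intro hmod
        have hkb : (p:ℤ)^j ∣ (k:ℤ) - b := by
          have h1 := Nat.div_add_mod k (p^j)
          refine ⟨(k / p^j : ℕ), ?_⟩
          have : (k:ℤ) = (p:ℤ)^j * ((k / p^j : ℕ):ℤ) + (b:ℤ) := by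
            exact_mod_cast congrArg (Nat.cast : ℕ → ℤ) (by omega : k = p^j * (k / p^j) + b)
          omega
        constructor
        · have hpk : ¬ p ∣ k := by
            intro hpk
            apply hpb
            have h1 := Nat.div_add_mod k (p^j)
            have h2 : p ∣ p^j := dvd_pow_self _ (by omega)
            have : p ∣ b := by
              rw [← hmod]
              exact (Nat.dvd_mod_iff h2).mpr hpk
            exact this
          have : Nat.Coprime k p := (Nat.coprime_comm.mp (hp.coprime_iff_not_dvd.mpr hpk))
          exact Nat.Coprime.pow_right e this
        · have h := dvd_add hkb hmodb
          have heq : (k:ℤ) - b + ((b:ℤ) - a) = (k:ℤ) - a := by ring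
          rwa [heq] at h
    rw [hset, show p^e = p^j * p^(e-j) by rw [← pow_add]; congr 1; omega]
    exact count_mod _ _ _ hblt

lemma sum_ite_count (S : Finset ℕ) (P : ℕ → Prop) [DecidablePred P] (c : ℤ) :
    ∑ k ∈ S, (if P k then c else 0) = ((S.filter P).card : ℤ) * c := by
  rw [← Finset.sum_filter, Finset.sum_const, nsmul_eq_mul]

lemma key_prime_pow {p : ℕ} (e : ℕ) (hp : p.Prime) (he : e ≠ 0) (a : ℤ) :
    ∑ k ∈ (range (p^e)).filter (fun k => Nat.gcd k (p^e) = 1), ramanujanSum (p^e) ((k:ℤ) - a)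
      = μ (p^e) * ramanujanSum (p^e) a := by
  rcases eq_or_ne e 1 with rfl | he2
  · -- e = 1
    have hScard : ((range (p^1)).filter (fun k => Nat.gcd k (p^1) = 1)).card = p - 1 := by
      have hset : (range (p^1)).filter (fun k => Nat.gcd k (p^1) = 1) = (range p).erase 0 := by
        ext k
        simp only [mem_filter, mem_range, mem_erase, pow_one]
        constructor
        · rintro ⟨hk, hg⟩
          refine ⟨?_, hk⟩
          rintro rfl
          simp only [Nat.gcd_zero_left] at hg
          exact hp.one_lt.ne' hg
        · rintro ⟨hne, hk⟩
          refine ⟨hk, ?_⟩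
          have : ¬ p ∣ k := fun hdvd =>
            absurd (Nat.le_of_dvd (Nat.pos_of_ne_zero hne) hdvd) (not_le.mpr hk)
          exact Nat.coprime_comm.mp (hp.coprime_iff_not_dvd.mpr this)
      rw [hset, Finset.card_erase_of_mem (mem_range.mpr hp.pos), Finset.card_range]
    simp_rw [ramanujanSum_prime_pow 1 hp one_ne_zero, show (1:ℕ)-1 = 0 from rfl, pow_zero,
      one_dvd, if_true]
    rw [Finset.sum_sub_distrib, sum_ite_count, filter_filter,
      count_coprime_dvd hp le_rfl le_rfl a, Finset.sum_const, hScard]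
    simp only [pow_one, Nat.sub_self, pow_zero, nsmul_eq_mul, mul_one, moebius_apply_prime hp]
    by_cases hpa : (p:ℤ) ∣ a
    · rw [if_pos hpa, if_pos hpa]
      push_cast [Nat.cast_sub hp.one_le]
      ring
    · rw [if_neg hpa, if_neg hpa]
      push_cast [Nat.cast_sub hp.one_le]
      ring
  · -- e ≥ 2
    have he2' : 2 ≤ e := by
      rcases e with _ | _ | e
      · omega
      · omega
      · omega
    simp_rw [ramanujanSum_prime_pow e hp he]
    rw [Finset.sum_sub_distrib, sum_ite_count, sum_ite_count, filter_filter, filter_filter,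
      count_coprime_dvd hp (by omega) le_rfl a, count_coprime_dvd hp (by omega) (by omega) a,
      moebius_apply_prime_pow hp he, if_neg he2]
    by_cases hpa : (p:ℤ) ∣ a
    · simp [hpa]
    · rw [if_neg hpa, if_neg hpa]
      have h1 : e - e = 0 := Nat.sub_self e
      have h2 : e - (e-1) = 1 := by omega
      rw [h1, h2]
      push_cast
      have hpe : (p:ℤ)^e = (p:ℤ)^(e-1) * p := by
        rw [← pow_succ]; congr 1; omega
      rw [hpe]; ring

lemma dvd_mod_sub_self (M k d : ℕ) (hd : d ∣ M) : (d:ℤ) ∣ ((k % M : ℕ):ℤ) - (k:ℤ) := by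
  have hcast : (k:ℤ) = (M:ℤ) * ((k/M : ℕ):ℤ) + ((k % M : ℕ):ℤ) := by
    exact_mod_cast (Nat.div_add_mod k M).symm
  exact (Int.natCast_dvd_natCast.mpr hd).trans ⟨-((k/M : ℕ):ℤ), by linear_combination -hcast⟩

lemma key_general (n : ℕ) (hn : n ≠ 0) (a : ℤ) :
    ∑ k ∈ (range n).filter (fun k => Nat.gcd k n = 1), ramanujanSum n ((k:ℤ) - a)
      = μ n * ramanujanSum n a := by
  induction n using Nat.recOnPosPrimePosCoprime with
  | prime_pow p e hpp he => exact key_prime_pow e hpp he.ne' a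
  | zero => exact absurd rfl hn
  | one => simp [ramanujanSum_one]
  | coprime m n hm1 hn1 hcop ihm ihn =>
    have hm0 : m ≠ 0 := by omega
    have hn0 : n ≠ 0 := by omega
    haveI : NeZero m := ⟨hm0⟩
    haveI : NeZero n := ⟨hn0⟩
    haveI : NeZero (m*n) := ⟨mul_ne_zero hm0 hn0⟩
    set f : ℕ → ℤ := fun k => ramanujanSum m ((k:ℤ) - a) with hfdef
    set g : ℕ → ℤ := fun k => ramanujanSum n ((k:ℤ) - a) with hgdef
    have hf : ∀ k, f (k % m) = f k := fun k =>
      ramanujanSum_congr (by simpa using dvd_mod_sub_self m k m dvd_rfl)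
    have hg : ∀ k, g (k % n) = g k := fun k =>
      ramanujanSum_congr (by simpa using dvd_mod_sub_self n k n dvd_rfl)
    have step1 : ∑ k ∈ (range (m*n)).filter (fun k => Nat.gcd k (m*n) = 1),
        ramanujanSum (m*n) ((k:ℤ) - a)
        = ∑ u : (ZMod (m*n))ˣ, f ((u : ZMod (m*n)).val) * g ((u : ZMod (m*n)).val) := by
      rw [← sum_units_eq (fun k => ramanujanSum (m*n) ((k:ℤ) - a))]
      exact Fintype.sum_congr _ _ fun u => ramanujanSum_mul hcop hm0 hn0 _
    rw [step1, sum_units_mul_split hcop f g hf hg, sum_units_eq, sum_units_eq,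
      hfdef, hgdef, ihm hm0, ihn hn0, ramanujanSum_mul hcop hm0 hn0,
      isMultiplicative_moebius.map_mul_of_coprime hcop]
    ring

lemma main_range : ∀ {r : ℕ} (a : Fin r → ℤ) (m : Fin r → ℕ), (∀ i, 0 < m i) →
    (∀ i j, i ≠ j → Nat.Coprime (m i) (m j)) →
    ∑ k ∈ (range (∏ i, m i)).filter (fun k => Nat.gcd k (∏ i, m i) = 1),
      ∏ i, ramanujanSum (m i) ((k : ℤ) - a i) =
    μ (∏ i, m i) * ∏ i, ramanujanSum (m i) (a i) := by
  intro r
  induction r with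
  | zero =>
    intro a m hm hcop
    simp
  | succ r ih =>
    intro a m hm hcop
    have hM0 : m 0 ≠ 0 := (hm 0).ne'
    have hN0 : (∏ i : Fin r, m i.succ) ≠ 0 :=
      (Finset.prod_pos fun i _ => hm i.succ).ne'
    haveI : NeZero (m 0) := ⟨hM0⟩
    haveI : NeZero (∏ i : Fin r, m i.succ) := ⟨hN0⟩
    haveI : NeZero (m 0 * ∏ i : Fin r, m i.succ) := ⟨mul_ne_zero hM0 hN0⟩
    have hcop0 : Nat.Coprime (m 0) (∏ i : Fin r, m i.succ) :=
      Nat.Coprime.prod_right fun i _ => hcop 0 i.succ (Fin.succ_ne_zero i).symm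
    set f : ℕ → ℤ := fun k => ramanujanSum (m 0) ((k:ℤ) - a 0) with hfdef
    set g : ℕ → ℤ := fun k => ∏ i : Fin r, ramanujanSum (m i.succ) ((k:ℤ) - a i.succ)
      with hgdef
    have hf : ∀ k, f (k % m 0) = f k := fun k =>
      ramanujanSum_congr (by simpa using dvd_mod_sub_self (m 0) k (m 0) dvd_rfl)
    have hg : ∀ k, g (k % (∏ i : Fin r, m i.succ)) = g k := by
      intro k
      refine Finset.prod_congr rfl fun i _ => ramanujanSum_congr ?_
      have hd : m i.succ ∣ ∏ i : Fin r, m i.succ := Finset.dvd_prod_of_mem _ (mem_univ i)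
      simpa using dvd_mod_sub_self (∏ i : Fin r, m i.succ) k (m i.succ) hd
    have hprod : (∏ i : Fin (r+1), m i) = m 0 * ∏ i : Fin r, m i.succ :=
      Fin.prod_univ_succ m
    rw [hprod]
    have step1 : ∑ k ∈ (range (m 0 * ∏ i : Fin r, m i.succ)).filter
          (fun k => Nat.gcd k (m 0 * ∏ i : Fin r, m i.succ) = 1),
        ∏ i : Fin (r+1), ramanujanSum (m i) ((k:ℤ) - a i)
        = ∑ u : (ZMod (m 0 * ∏ i : Fin r, m i.succ))ˣ,
            f ((u : ZMod (m 0 * ∏ i : Fin r, m i.succ)).val)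
            * g ((u : ZMod (m 0 * ∏ i : Fin r, m i.succ)).val) := by
      rw [← sum_units_eq (fun k => ∏ i : Fin (r+1), ramanujanSum (m i) ((k:ℤ) - a i))]
      exact Fintype.sum_congr _ _ fun u => Fin.prod_univ_succ _
    rw [step1, sum_units_mul_split hcop0 f g hf hg, sum_units_eq, sum_units_eq,
      hfdef, key_general (m 0) hM0 (a 0),
      ih (fun i => a i.succ) (fun i => m i.succ) (fun i => hm i.succ)
        (fun i j hij => hcop i.succ j.succ (fun h => hij (Fin.succ_injective r h))),
      isMultiplicative_moebius.map_mul_of_coprime hcop0, Fin.prod_univ_succ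
        (fun i => ramanujanSum (m i) (a i))]
    ring

theorem eval_R_a_pairwise_coprime {r : ℕ} (a : Fin r → ℤ) (m : Fin r → ℕ)
    (hm : ∀ i, 0 < m i)
    (hcop : ∀ i j, i ≠ j → Nat.Coprime (m i) (m j)) :
    ∑ k ∈ (Icc 1 (∏ i, m i)).filter (fun k => Nat.gcd k (∏ i, m i) = 1),
      ∏ i, ramanujanSum (m i) ((k : ℤ) - a i) =
    μ (∏ i, m i) * ∏ i, ramanujanSum (m i) (a i) := by
  have hMpos : 0 < ∏ i, m i := Finset.prod_pos fun i _ => hm i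
  rcases eq_or_lt_of_le (Nat.succ_le_of_lt hMpos) with h1 | h2
  · -- ∏ = 1
    have hM1 : (∏ i, m i) = 1 := h1.symm
    have hmi : ∀ i, m i = 1 := fun i =>
      Nat.eq_one_of_dvd_one (hM1 ▸ Finset.dvd_prod_of_mem m (mem_univ i))
    rw [hM1]
    have : (Icc 1 1).filter (fun k => Nat.gcd k 1 = 1) = {1} := by decide
    rw [this, Finset.sum_singleton]
    simp only [hmi, ramanujanSum_one]
    simp
  · -- ∏ ≥ 2
    have hset : (Icc 1 (∏ i, m i)).filter (fun k => Nat.gcd k (∏ i, m i) = 1)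
        = (range (∏ i, m i)).filter (fun k => Nat.gcd k (∏ i, m i) = 1) := by
      ext k
      simp only [mem_filter, mem_Icc, mem_range]
      constructor
      · rintro ⟨⟨hk1, hk2⟩, hg⟩
        refine ⟨?_, hg⟩
        rcases eq_or_lt_of_le hk2 with rfl | h
        · rw [Nat.gcd_self] at hg; omega
        · exact h
      · rintro ⟨hk, hg⟩
        refine ⟨⟨?_, hk.le⟩, hg⟩
        rcases Nat.eq_zero_or_pos k with rfl | h
        · rw [Nat.gcd_zero_left] at hg; omega
        · exact h
    rw [hset]
    exact main_range a m hm hcop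
end

section
/- For positive integers m_1,…,m_r with m = lcm(m_1,…,m_r), Σ_{1 ≤ k ≤ m, gcd(k,m)=1} c_{m_1}(k−1)···c_{m_r}(k−1) = φ(m)·Σ_{d_1|m_1,…,d_r|m_r} d_1 μ(m_1/d_1)···d_r μ(m_r/d_r)/φ(lcm(d_1,…,d_r)). -/
open Finset ArithmeticFunction
open scoped ArithmeticFunction.Moebius

lemma card_ker_mul (n D : ℕ) [NeZero n] (hD : D ∣ n) :
    Nat.card (ZMod.unitsMap hD).ker * D.totient = n.totient := by
  have hDz : NeZero D := ⟨fun h => (NeZero.ne n) (eq_zero_of_zero_dvd (h ▸ hD))⟩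
  have h1 : (ZMod.unitsMap hD).ker.index = Nat.card (ZMod D)ˣ := by
    rw [Subgroup.index_ker, MonoidHom.range_eq_top.mpr (ZMod.unitsMap_surjective hD)]
    exact Subgroup.card_top
  calc Nat.card (ZMod.unitsMap hD).ker * D.totient
      = Nat.card (ZMod.unitsMap hD).ker * (ZMod.unitsMap hD).ker.index := by
        rw [h1]; congr 1; rw [Nat.card_eq_fintype_card, ZMod.card_units_eq_totient]
    _ = Nat.card (ZMod n)ˣ := Subgroup.card_mul_index _
    _ = n.totient := by rw [Nat.card_eq_fintype_card, ZMod.card_units_eq_totient]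

lemma mod_one_iff (D k : ℕ) (hk : 1 ≤ k) : D ∣ k - 1 ↔ ((k : ZMod D) = 1) := by
  rw [show (1 : ZMod D) = ((1:ℕ) : ZMod D) by push_cast; ring, ZMod.natCast_eq_natCast_iff]
  exact ⟨fun h => ((Nat.modEq_iff_dvd' hk).mpr h).symm,
    fun h => (Nat.modEq_iff_dvd' hk).mp h.symm⟩

lemma count_mul_totient (n D : ℕ) (hn : 0 < n) (hD : D ∣ n) :
    ((Icc 1 n).filter (fun k => Nat.gcd k n = 1 ∧ D ∣ k - 1)).card * D.totient
      = n.totient := by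
  haveI : NeZero n := ⟨hn.ne'⟩
  rw [← card_ker_mul n D hD]
  congr 1
  rw [Nat.card_eq_fintype_card, Fintype.card_subtype]
  refine Finset.card_bij (fun k hk => ZMod.unitOfCoprime k (mem_filter.mp hk).2.1) ?_ ?_ ?_
  · intro k hk
    obtain ⟨hk1, hk2, hk3⟩ := mem_filter.mp hk
    simp only [mem_filter, mem_univ, true_and, MonoidHom.mem_ker]
    ext
    rw [ZMod.unitsMap_def]
    simp only [Units.coe_map, MonoidHom.coe_coe, ZMod.coe_unitOfCoprime, Units.val_one]
    rw [map_natCast]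
    exact (mod_one_iff D k (mem_Icc.mp hk1).1).mp hk3
  · intro a ha b hb hab
    have h := congrArg (fun u => ((u : (ZMod n)ˣ) : ZMod n)) hab
    simp only [ZMod.coe_unitOfCoprime] at h
    have h2 : a % n = b % n := (ZMod.natCast_eq_natCast_iff a b n).mp h
    have ha' := mem_Icc.mp (mem_filter.mp ha).1
    have hb' := mem_Icc.mp (mem_filter.mp hb).1
    rcases eq_or_lt_of_le ha'.2 with h1|h1 <;> rcases eq_or_lt_of_le hb'.2 with hh2|hh2
    · omega
    · subst h1; rw [Nat.mod_self, eq_comm, Nat.mod_eq_of_lt hh2] at h2; omega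
    · subst hh2; rw [Nat.mod_self, Nat.mod_eq_of_lt h1] at h2; omega
    · rw [Nat.mod_eq_of_lt h1, Nat.mod_eq_of_lt hh2] at h2; exact h2
  · intro u hu
    have hker : ZMod.unitsMap hD u = 1 := by
      simpa only [mem_filter, mem_univ, true_and, MonoidHom.mem_ker] using hu
    set x : ZMod n := (u : ZMod n) with hx
    by_cases hv : x.val = 0
    · have hx0 : x = 0 := (ZMod.val_eq_zero x).mp hv
      have h01 : (0 : ZMod n) = 1 := by
        have := u.isUnit
        rw [← hx, hx0, isUnit_zero_iff] at this
        exact this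
      have hn1 : n = 1 := by
        haveI : Subsingleton (ZMod n) := subsingleton_of_zero_eq_one h01
        have := Fintype.card_le_one_iff_subsingleton.mpr this
        rw [ZMod.card] at this
        omega
      subst hn1
      refine ⟨1, mem_filter.mpr ⟨by simp, by simp, by simp⟩, ?_⟩
      ext
      exact Subsingleton.elim _ _
    · have hvlt : x.val < n := ZMod.val_lt x
      have hcop : Nat.Coprime x.val n := ZMod.val_coe_unit_coprime u
      refine ⟨x.val, mem_filter.mpr ⟨mem_Icc.mpr ⟨by omega, by omega⟩, hcop, ?_⟩, ?_⟩
      · rw [mod_one_iff D x.val (by omega)]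
        have : (x.val : ZMod D) = ZMod.castHom hD (ZMod D) x := by
          rw [ZMod.castHom_apply, ZMod.natCast_val]
        rw [this]
        have := congrArg (fun u => ((u : (ZMod D)ˣ) : ZMod D)) hker
        simpa [ZMod.unitsMap_def] using this
      · ext
        simp only [ZMod.coe_unitOfCoprime]
        exact ZMod.natCast_rightInverse x


lemma count_q (n D : ℕ) (hn : 0 < n) (hD : D ∣ n) :
    ((((Icc 1 n).filter (fun k => Nat.gcd k n = 1 ∧ D ∣ k - 1)).card : ℚ))
      = (n.totient : ℚ) / (D.totient : ℚ) := by
  have hDpos : 0 < D := Nat.pos_of_dvd_of_pos hD hn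
  have hne : (D.totient : ℚ) ≠ 0 := by exact_mod_cast (Nat.totient_pos.mpr hDpos).ne'
  field_simp
  exact_mod_cast count_mul_totient n D hn hD

lemma gcd_divisors (a n : ℕ) (hn : n ≠ 0) :
    (Nat.gcd a n).divisors = n.divisors.filter (· ∣ a) := by
  ext d
  simp only [Nat.mem_divisors, mem_filter, Nat.dvd_gcd_iff, ne_eq, Nat.gcd_eq_zero_iff]
  tauto

lemma ram_eq (n a : ℕ) (hn : n ≠ 0) :
    ((ramanujanSum n (a : ℤ)) : ℚ) =
      ∑ d ∈ n.divisors, if d ∣ a then (d : ℚ) * (μ (n / d) : ℚ) else 0 := by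
  rw [ramanujanSum, Int.gcd_natCast_natCast, gcd_divisors a n hn, sum_filter]
  push_cast
  rfl

lemma prod_ite_all {ι : Type*} [Fintype ι] (p : ι → Prop) [DecidablePred p] (f : ι → ℚ) :
    ∏ i, (if p i then f i else 0) = if ∀ i, p i then ∏ i, f i else 0 := by
  by_cases h : ∀ i, p i
  · rw [if_pos h]; exact Finset.prod_congr rfl fun i _ => if_pos (h i)
  · rw [if_neg h]
    push_neg at h
    obtain ⟨i, hi⟩ := h
    exact Finset.prod_eq_zero (mem_univ i) (if_neg hi)

theorem eval_R {r : ℕ} (m : Fin r → ℕ) (hm : ∀ i, 0 < m i) :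
    ∑ k ∈ (Icc 1 (Finset.univ.lcm m)).filter
        (fun k => Nat.gcd k (Finset.univ.lcm m) = 1),
      ∏ i, (ramanujanSum (m i) ((k : ℤ) - 1) : ℚ) =
    (Nat.totient (Finset.univ.lcm m) : ℚ) *
      ∑ d ∈ Fintype.piFinset (fun i => (m i).divisors),
        (∏ i, (d i : ℚ) * (μ (m i / d i) : ℚ)) /
          (Nat.totient (Finset.univ.lcm d) : ℚ) := by
  set M := Finset.univ.lcm m with hMdef
  have hmi : ∀ i, m i ∣ M := fun i => Finset.dvd_lcm (mem_univ i)
  have hM0 : 0 < M := by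
    rcases Nat.eq_zero_or_pos M with h | h
    · exfalso
      rcases Finset.lcm_eq_zero_iff.mp h with ⟨i, -, hi⟩
      exact (hm i).ne' hi
    · exact h
  have key : ∀ k ∈ (Icc 1 M).filter (fun k => Nat.gcd k M = 1),
      ∏ i, ((ramanujanSum (m i) ((k:ℤ) - 1)) : ℚ)
        = ∑ d ∈ Fintype.piFinset (fun i => (m i).divisors),
            if ∀ i, d i ∣ k - 1 then ∏ i, ((d i : ℚ) * (μ (m i / d i) : ℚ)) else 0 := by
    intro k hk
    have hk1 : 1 ≤ k := (mem_Icc.mp (mem_filter.mp hk).1).1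
    have hcast : ((k:ℤ) - 1) = ((k - 1 : ℕ) : ℤ) := by
      rw [Nat.cast_sub hk1]; push_cast; ring
    calc ∏ i, ((ramanujanSum (m i) ((k:ℤ) - 1)) : ℚ)
        = ∏ i, ∑ d ∈ (m i).divisors, if d ∣ k - 1 then (d:ℚ) * (μ (m i / d):ℚ) else 0 := by
          refine Finset.prod_congr rfl fun i _ => ?_
          rw [hcast, ram_eq (m i) (k-1) (hm i).ne']
      _ = ∑ d ∈ Fintype.piFinset (fun i => (m i).divisors),
            ∏ i, if d i ∣ k - 1 then (d i:ℚ) * (μ (m i / d i):ℚ) else 0 :=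
          Finset.prod_univ_sum _ _
      _ = _ := Finset.sum_congr rfl fun d _ => (prod_ite_all _ _).trans (by congr)
  rw [Finset.sum_congr rfl key, Finset.sum_comm, Finset.mul_sum]
  refine Finset.sum_congr rfl fun d hd => ?_
  have hdm : ∀ i, d i ∣ m i := fun i => (Nat.mem_divisors.mp (Fintype.mem_piFinset.mp hd i)).1
  have hdM : Finset.univ.lcm d ∣ M := Finset.lcm_dvd fun i _ => (hdm i).trans (hmi i)
  rw [← Finset.sum_filter, Finset.sum_const, nsmul_eq_mul, Finset.filter_filter]
  have hfe : ((Icc 1 M).filter (fun k => Nat.gcd k M = 1 ∧ ∀ i, d i ∣ k - 1))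
       = ((Icc 1 M).filter (fun k => Nat.gcd k M = 1 ∧ Finset.univ.lcm d ∣ k - 1)) := by
    apply Finset.filter_congr
    intro k _
    simp [Finset.lcm_dvd_iff]
  rw [hfe, count_q M (Finset.univ.lcm d) hM0 hdM]
  ring
end

section
/- For every prime p and e_1 ≥ e_2 ≥ 1: Σ_{1 ≤ k ≤ p^{e_1}, gcd(k,p)=1} c_{p^{e_1}}(k−1) c_{p^{e_2}}(k−1) equals 0 if e_1 > e_2, equals p^{2e−1}(p−1) if e_1 = e_2 = e > 1, and equals p² − p − 1 if e_1 = e_2 = 1. -/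
open Finset ArithmeticFunction
open scoped ArithmeticFunction.Moebius

lemma dvd_gcd_iff_aux {p : ℕ} (m : ℤ) {i e : ℕ} (hie : i ≤ e) :
    p ^ i ∣ Int.gcd m ((p ^ e : ℕ) : ℤ) ↔ (p : ℤ) ^ i ∣ m := by
  have hg : Int.gcd m ((p ^ e : ℕ) : ℤ) = Nat.gcd m.natAbs (p ^ e) := by
    simp [Int.gcd, Int.natAbs_pow]
  rw [hg]
  constructor
  · intro h
    have h1 : p ^ i ∣ m.natAbs := h.trans (Nat.gcd_dvd_left _ _)
    have := Int.natCast_dvd.mpr h1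
    push_cast at this
    exact this
  · intro h
    refine Nat.dvd_gcd ?_ (pow_dvd_pow p hie)
    rw [← Int.natCast_dvd]
    push_cast
    exact h

lemma ram_prime_pow {p : ℕ} (hp : p.Prime) {e : ℕ} (he : 1 ≤ e) (m : ℤ) :
    ramanujanSum (p ^ e) m =
      (p : ℤ) ^ e * (if (p : ℤ) ^ e ∣ m then 1 else 0)
        - (p : ℤ) ^ (e - 1) * (if (p : ℤ) ^ (e - 1) ∣ m then 1 else 0) := by
  obtain ⟨f, rfl⟩ : ∃ f, e = f + 1 := ⟨e - 1, by omega⟩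
  have hgdvd : Int.gcd m ((p ^ (f + 1) : ℕ) : ℤ) ∣ p ^ (f + 1) := by
    simpa [Int.gcd, Int.natAbs_pow] using Nat.gcd_dvd_right m.natAbs (p ^ (f + 1))
  have hgne : Int.gcd m ((p ^ (f + 1) : ℕ) : ℤ) ≠ 0 := by
    simp only [Int.gcd, Int.natAbs_pow, Int.natAbs_natCast]
    exact fun h => pow_ne_zero (f + 1) hp.ne_zero (Nat.eq_zero_of_gcd_eq_zero_right h)
  set g := Int.gcd m ((p ^ (f + 1) : ℕ) : ℤ) with hgdef
  have hdivset : g.divisors = (p ^ (f + 1)).divisors.filter (· ∣ g) := by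
    ext d
    simp only [Nat.mem_divisors, Finset.mem_filter]
    constructor
    · rintro ⟨hd, -⟩
      exact ⟨⟨hd.trans hgdvd, pow_ne_zero _ hp.ne_zero⟩, hd⟩
    · rintro ⟨-, hd⟩
      exact ⟨hd, hgne⟩
  rw [ramanujanSum, ← hgdef, hdivset, Finset.sum_filter,
    Nat.sum_divisors_prime_pow hp, Finset.sum_range_succ, Finset.sum_range_succ]
  have h0 : ∑ i ∈ range f,
      (if p ^ i ∣ g then ((p ^ i : ℕ) : ℤ) * μ (p ^ (f + 1) / p ^ i) else 0) = 0 := by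
    apply Finset.sum_eq_zero
    intro i hi
    rw [Finset.mem_range] at hi
    have hmu : μ (p ^ (f + 1) / p ^ i) = 0 := by
      rw [Nat.pow_div (by omega) hp.pos, moebius_apply_prime_pow hp (by omega),
        if_neg (by omega)]
    simp [hmu]
  rw [h0]
  have hpf : p ^ (f + 1) / p ^ f = p := by
    rw [Nat.pow_div (by omega) hp.pos]; simp
  have hpf1 : p ^ (f + 1) / p ^ (f + 1) = 1 := Nat.div_self (pow_pos hp.pos _)
  rw [hpf, hpf1, moebius_apply_prime hp, moebius_apply_one]
  simp only [Nat.add_sub_cancel, hgdef, dvd_gcd_iff_aux m (Nat.le_succ f),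
    dvd_gcd_iff_aux m (le_refl (f + 1))]
  split_ifs <;> push_cast <;> ring

lemma count_aux {p : ℕ} (hp : p.Prime) {e a : ℕ} (ha : 1 ≤ a) (hae : a ≤ e) :
    ∑ k ∈ (Icc 1 (p ^ e)).filter (fun k => Nat.gcd k p = 1),
      (if (p : ℤ) ^ a ∣ ((k : ℤ) - 1) then (1 : ℤ) else 0) = p ^ (e - a) := by
  rw [Finset.sum_boole, Finset.filter_filter]
  have hset : (Icc 1 (p ^ e)).filter
      (fun k => Nat.gcd k p = 1 ∧ (p : ℤ) ^ a ∣ ((k : ℤ) - 1))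
      = (range (p ^ (e - a))).image (fun j => j * p ^ a + 1) := by
    ext k
    simp only [Finset.mem_filter, Finset.mem_Icc, Finset.mem_image, Finset.mem_range]
    constructor
    · rintro ⟨⟨h1, hle⟩, hgcd, hdvd⟩
      have hdvd' : p ^ a ∣ k - 1 := by
        rw [← Int.natCast_dvd_natCast]
        push_cast [h1]
        exact hdvd
      obtain ⟨j, hj⟩ := hdvd'
      have hk : j * p ^ a + 1 = k := by
        rw [mul_comm]; exact ((Nat.sub_eq_iff_eq_add h1).mp hj).symm
      refine ⟨j, ?_, hk⟩
      have hpe : p ^ (e - a) * p ^ a = p ^ e := by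
        rw [← pow_add]; congr 1; omega
      have h2 : j * p ^ a < p ^ (e - a) * p ^ a := by omega
      exact Nat.lt_of_mul_lt_mul_right h2
    · rintro ⟨j, hj, rfl⟩
      have hja : (j + 1) * p ^ a ≤ p ^ (e - a) * p ^ a := Nat.mul_le_mul_right _ hj
      rw [← pow_add, Nat.sub_add_cancel hae] at hja
      have hexp : (j + 1) * p ^ a = j * p ^ a + p ^ a := by ring
      have hp1 : 1 ≤ p ^ a := Nat.one_le_pow _ _ hp.pos
      refine ⟨⟨by omega, by omega⟩, ?_, ?_⟩
      · have hnd : ¬ p ∣ j * p ^ a + 1 := by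
          intro hd
          have h1 : p ∣ j * p ^ a := Dvd.dvd.mul_left (dvd_pow_self p (by omega)) j
          have h2 := (Nat.dvd_add_right h1).mp hd
          have := Nat.le_of_dvd one_pos h2
          have := hp.two_le
          omega
        exact Nat.coprime_comm.mp ((hp.coprime_iff_not_dvd).mpr hnd)
      · refine ⟨(j : ℤ), ?_⟩
        push_cast
        ring
  rw [hset, Finset.card_image_of_injective _ ?_, Finset.card_range]
  · push_cast; ring
  · intro x y h
    simp only at h
    exact Nat.eq_of_mul_eq_mul_right (pow_pos hp.pos a) (Nat.add_right_cancel h)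

lemma card_S_one {p : ℕ} (hp : p.Prime) :
    ∑ k ∈ (Icc 1 (p ^ 1)).filter (fun k => Nat.gcd k p = 1), (1 : ℤ) = (p : ℤ) - 1 := by
  have h2p := hp.two_le
  have hset : (Icc 1 (p ^ 1)).filter (fun k => Nat.gcd k p = 1) = Icc 1 (p - 1) := by
    ext k
    simp only [Finset.mem_filter, Finset.mem_Icc, pow_one]
    constructor
    · rintro ⟨⟨h1, hle⟩, hgcd⟩
      refine ⟨h1, ?_⟩
      rcases eq_or_lt_of_le hle with rfl | hlt
      · rw [Nat.gcd_self] at hgcd; omega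
      · omega
    · rintro ⟨h1, hle⟩
      refine ⟨⟨h1, by omega⟩, ?_⟩
      have hnd : ¬ p ∣ k := fun hd => by
        have := Nat.le_of_dvd (by omega) hd; omega
      exact Nat.coprime_comm.mp ((hp.coprime_iff_not_dvd).mpr hnd)
  rw [hset, Finset.sum_const, Nat.card_Icc, nsmul_eq_mul, mul_one,
    show p - 1 + 1 - 1 = p - 1 from by omega, Nat.cast_sub (by omega)]
  norm_num

theorem eval_R_two_prime_powers (p : ℕ) (hp : p.Prime) (e₁ e₂ : ℕ)
    (h21 : e₂ ≤ e₁) (h2 : 1 ≤ e₂) :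
    ∑ k ∈ (Icc 1 (p ^ e₁)).filter (fun k => Nat.gcd k p = 1),
      ramanujanSum (p ^ e₁) ((k : ℤ) - 1) * ramanujanSum (p ^ e₂) ((k : ℤ) - 1) =
    if e₂ < e₁ then 0
    else if 1 < e₁ then (p : ℤ) ^ (2 * e₁ - 1) * ((p : ℤ) - 1)
    else (p : ℤ) ^ 2 - (p : ℤ) - 1 := by
  have key : ∀ (m : ℤ) (a b : ℕ), a ≤ b →
      (if (p : ℤ) ^ b ∣ m then (1 : ℤ) else 0) * (if (p : ℤ) ^ a ∣ m then (1 : ℤ) else 0)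
        = (if (p : ℤ) ^ b ∣ m then 1 else 0) := by
    intro m a b hab
    by_cases hb : (p : ℤ) ^ b ∣ m
    · rw [if_pos hb, if_pos ((pow_dvd_pow _ hab).trans hb), mul_one]
    · simp [hb]
  rcases lt_or_eq_of_le h21 with hlt | heq
  · -- case e₂ < e₁
    rw [if_pos hlt]
    obtain ⟨g, rfl⟩ : ∃ g, e₁ = g + 1 := ⟨e₁ - 1, by omega⟩
    obtain ⟨d, rfl⟩ : ∃ d, e₂ = d + 1 := ⟨e₂ - 1, by omega⟩
    have expand : ∀ m : ℤ, ramanujanSum (p ^ (g + 1)) m * ramanujanSum (p ^ (d + 1)) m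
        = ((p : ℤ) ^ (g + d + 2) - (p : ℤ) ^ (g + d + 1))
            * (if (p : ℤ) ^ (g + 1) ∣ m then 1 else 0)
          + ((p : ℤ) ^ (g + d) - (p : ℤ) ^ (g + d + 1))
            * (if (p : ℤ) ^ g ∣ m then 1 else 0) := by
      intro m
      rw [ram_prime_pow hp (by omega) m, ram_prime_pow hp (by omega) m]
      simp only [Nat.add_sub_cancel]
      set A1 := (if (p : ℤ) ^ (g + 1) ∣ m then (1 : ℤ) else 0) with hA1
      set B1 := (if (p : ℤ) ^ g ∣ m then (1 : ℤ) else 0) with hB1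
      set A2 := (if (p : ℤ) ^ (d + 1) ∣ m then (1 : ℤ) else 0) with hA2
      set B2 := (if (p : ℤ) ^ d ∣ m then (1 : ℤ) else 0) with hB2
      have hexp : ((p : ℤ) ^ (g + 1) * A1 - (p : ℤ) ^ g * B1)
            * ((p : ℤ) ^ (d + 1) * A2 - (p : ℤ) ^ d * B2)
          = (p : ℤ) ^ (g + 1) * (p : ℤ) ^ (d + 1) * (A1 * A2)
            - (p : ℤ) ^ (g + 1) * (p : ℤ) ^ d * (A1 * B2)
            - (p : ℤ) ^ g * (p : ℤ) ^ (d + 1) * (B1 * A2)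
            + (p : ℤ) ^ g * (p : ℤ) ^ d * (B1 * B2) := by ring
      rw [hexp, hA1, hB1, hA2, hB2, key m (d + 1) (g + 1) (by omega),
        key m d (g + 1) (by omega), key m (d + 1) g (by omega), key m d g (by omega)]
      ring
    simp only [expand]
    rw [Finset.sum_add_distrib, ← Finset.mul_sum, ← Finset.mul_sum,
      count_aux hp (by omega) (le_refl (g + 1)),
      count_aux hp (show 1 ≤ g by omega) (by omega),
      show g + 1 - (g + 1) = 0 from by omega, show g + 1 - g = 1 from by omega]
    ring
  · -- case e₂ = e₁
    subst heq
    rw [if_neg (lt_irrefl e₂)]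
    obtain ⟨f, rfl⟩ : ∃ f, e₂ = f + 1 := ⟨e₂ - 1, by omega⟩
    have expand : ∀ m : ℤ, ramanujanSum (p ^ (f + 1)) m * ramanujanSum (p ^ (f + 1)) m
        = ((p : ℤ) ^ (2 * f + 2) - 2 * (p : ℤ) ^ (2 * f + 1))
            * (if (p : ℤ) ^ (f + 1) ∣ m then 1 else 0)
          + (p : ℤ) ^ (2 * f) * (if (p : ℤ) ^ f ∣ m then 1 else 0) := by
      intro m
      rw [ram_prime_pow hp (by omega) m]
      simp only [Nat.add_sub_cancel]
      set A := (if (p : ℤ) ^ (f + 1) ∣ m then (1 : ℤ) else 0) with hA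
      set B := (if (p : ℤ) ^ f ∣ m then (1 : ℤ) else 0) with hB
      have hexp : ((p : ℤ) ^ (f + 1) * A - (p : ℤ) ^ f * B)
            * ((p : ℤ) ^ (f + 1) * A - (p : ℤ) ^ f * B)
          = (p : ℤ) ^ (f + 1) * (p : ℤ) ^ (f + 1) * (A * A)
            - 2 * ((p : ℤ) ^ (f + 1) * (p : ℤ) ^ f) * (A * B)
            + (p : ℤ) ^ f * (p : ℤ) ^ f * (B * B) := by ring
      rw [hexp, hA, hB, key m (f + 1) (f + 1) le_rfl, key m f (f + 1) (by omega),
        key m f f le_rfl]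
      ring
    simp only [expand]
    rw [Finset.sum_add_distrib, ← Finset.mul_sum, ← Finset.mul_sum,
      count_aux hp (by omega) (le_refl (f + 1)),
      show f + 1 - (f + 1) = 0 from by omega]
    by_cases hf : 1 ≤ f
    · rw [if_pos (show 1 < f + 1 by omega),
        count_aux hp hf (by omega), show f + 1 - f = 1 from by omega,
        show 2 * (f + 1) - 1 = 2 * f + 1 from by omega]
      ring
    · have hf0 : f = 0 := by omega
      subst hf0
      rw [if_neg (by omega)]
      have hsum : ∑ k ∈ (Icc 1 (p ^ (0 + 1))).filter (fun k => Nat.gcd k p = 1),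
          (if (p : ℤ) ^ 0 ∣ ((k : ℤ) - 1) then (1 : ℤ) else 0) = (p : ℤ) - 1 := by
        simpa using card_S_one hp
      rw [hsum]
      ring
end
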